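/- arXiv:0910.0378 — 5 statements merged into one kernel-verified Lean document; each statement's English description precedes it below -/
import Mathlib

section
/- For 0 < α < 1 and m > 0, define F_m : [0,∞) → ℝ by F_m(x) = (1-α) x^{α/(α-1)} for x > m^{α-1} and F_m(x) = m^α - α m x for 0 ≤ x ≤ m^{α-1}. Then F_m is Lipschitz continuous with Lipschitz constant α m. -/
open Real

/-- The Lipschitz truncation `F_m` of `x ↦ (1-α) x^{α/(α-1)}`:
`F_m(x) = (1-α)x^{α/(α-1)}` for `x > m^{α-1}` and `F_m(x) = m^α - αmx` for `0 ≤ x ≤ m^{α-1}`. -/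
noncomputable def Fm (α m x : ℝ) : ℝ :=
  if x ≤ m ^ (α - 1) then m ^ α - α * m * x else (1 - α) * x ^ (α / (α - 1))

/-- For `0 < α < 1` and `m > 0`, `F_m` is Lipschitz on `[0,∞)`
with Lipschitz constant `αm`. -/
theorem Fm_lipschitzOnWith (α m : ℝ) (hα0 : 0 < α) (hα1 : α < 1) (hm : 0 < m) :
    LipschitzOnWith (Real.toNNReal (α * m)) (Fm α m) (Set.Ici 0) := by
  set c : ℝ := m ^ (α - 1) with hc
  have hc0 : 0 < c := Real.rpow_pos_of_pos hm _
  have hα1' : α - 1 < 0 := by linarith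
  have hne : α - 1 ≠ 0 := by linarith
  have hcm : c ^ ((1:ℝ) / (α - 1)) = m := by
    rw [hc, ← Real.rpow_mul hm.le, mul_one_div, div_self hne, Real.rpow_one]
  set f' : ℝ → ℝ := fun x => -α * (max x c) ^ ((1:ℝ) / (α - 1)) with hf'
  -- value match at c
  have hval : m ^ α - α * m * c = (1 - α) * c ^ (α / (α - 1)) := by
    have h1 : c ^ (α / (α - 1)) = m ^ α := by
      rw [hc, ← Real.rpow_mul hm.le]
      congr 1
      field_simp
    have h2 : m * c = m ^ α := by
      rw [hc]
      nth_rewrite 1 [← Real.rpow_one m]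
      rw [← Real.rpow_add hm]
      norm_num
    have h3 : α * m * c = α * m ^ α := by rw [mul_assoc, h2]
    rw [h1]; linarith
  have hFc : ∀ y ∈ Set.Ici c, Fm α m y = (1 - α) * y ^ (α / (α - 1)) := by
    intro y hy
    rcases eq_or_lt_of_le (Set.mem_Ici.mp hy) with h | h
    · simp [Fm, ← h, hval]
    · simp [Fm, ← hc, not_le.mpr h]
  apply Convex.lipschitzOnWith_of_nnnorm_hasDerivWithin_le (f' := f') (convex_Ici 0)
  · intro x hx
    have h1 : HasDerivWithinAt (Fm α m) (f' x) (Set.Icc 0 c) x := by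
      rcases le_or_gt x c with hxc | hxc
      · have hmax : max x c = c := max_eq_right hxc
        have hlin : HasDerivWithinAt (fun y => m ^ α - α * m * y) (-(α * m)) (Set.Icc 0 c) x := by
          simpa using ((hasDerivAt_id x).const_mul (α * m)).const_sub (m ^ α)
            |>.hasDerivWithinAt
        have : HasDerivWithinAt (Fm α m) (-(α * m)) (Set.Icc 0 c) x := by
          apply hlin.congr (fun y hy => by simp [Fm, ← hc, hy.2]) (by simp [Fm, ← hc, hxc])
        convert this using 1
        rw [hf']; simp only [hmax, hcm]; ring
      · exact HasFDerivWithinAt.of_notMem_closure (by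
          rw [closure_Icc]
          exact fun h => absurd h.2 (not_le.mpr hxc))
    have h2 : HasDerivWithinAt (Fm α m) (f' x) (Set.Ici c) x := by
      rcases le_or_gt c x with hxc | hxc
      · have hx0 : x ≠ 0 := ne_of_gt (lt_of_lt_of_le hc0 hxc)
        have hmax : max x c = x := max_eq_left hxc
        have hpow : HasDerivAt (fun y : ℝ => (1 - α) * y ^ (α / (α - 1)))
            ((1 - α) * (α / (α - 1) * x ^ (α / (α - 1) - 1))) x :=
          (Real.hasDerivAt_rpow_const (Or.inl hx0)).const_mul _
        have : HasDerivWithinAt (Fm α m)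
            ((1 - α) * (α / (α - 1) * x ^ (α / (α - 1) - 1))) (Set.Ici c) x :=
          (hpow.hasDerivWithinAt).congr hFc (hFc x hxc)
        convert this using 1
        rw [hf']; simp only [hmax]
        have he : α / (α - 1) - 1 = 1 / (α - 1) := by field_simp; ring
        have hco : (1 - α) * (α / (α - 1)) = -α := by field_simp; ring
        rw [he, ← mul_assoc, hco]
      · exact HasFDerivWithinAt.of_notMem_closure (by
          rw [closure_Ici]; exact fun h => absurd h (not_le.mpr hxc))
    exact (h1.union h2).mono (fun y hy => by
      rcases le_total y c with h | h
      · exact Or.inl ⟨hy, h⟩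
      · exact Or.inr h)
  · intro x hx
    have hmaxc : c ≤ max x c := le_max_right _ _
    have hbound : (max x c) ^ ((1:ℝ) / (α - 1)) ≤ m := by
      rw [← hcm]
      exact Real.rpow_le_rpow_of_nonpos hc0 hmaxc
        (by apply div_nonpos_of_nonneg_of_nonpos <;> linarith)
    have hpos : (0:ℝ) ≤ (max x c) ^ ((1:ℝ) / (α - 1)) :=
      (Real.rpow_pos_of_pos (lt_of_lt_of_le hc0 hmaxc) _).le
    have : ‖f' x‖ ≤ α * m := by
      rw [hf']
      simp only [norm_mul, norm_neg, Real.norm_eq_abs, abs_of_pos hα0, abs_of_nonneg hpos]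
      exact mul_le_mul_of_nonneg_left hbound hα0.le
    rw [← NNReal.coe_le_coe, coe_nnnorm, Real.coe_toNNReal _ (by positivity)]
    exact this
end

section
/- Let 0 < α < 1, r ∈ ℝ, γ > αr. Then sup_{c > 0} ∫₀^∞ e^{-γt} c^α e^{α(r-c)t} dt = ((γ - αr)/(1-α))^{α-1}, attained at c = (γ - αr)/(1-α). -/
open MeasureTheory Real

lemma exp_neg_integral (b : ℝ) (hb : 0 < b) :
    (∫ t in Set.Ioi (0 : ℝ), Real.exp (-(b * t))) = 1 / b := by
  have := MeasureTheory.integral_comp_mul_left_Ioi (fun x => Real.exp (-x)) 0 hb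
  simp only [mul_zero, integral_exp_neg_Ioi, neg_zero, Real.exp_zero, smul_eq_mul,
    mul_one] at this
  rw [this, one_div]

lemma integral_eval (α r γ c : ℝ) (hK : 0 < γ - α * r + α * c) :
    (∫ t in Set.Ioi (0 : ℝ),
        Real.exp (-γ * t) * c ^ α * Real.exp (α * (r - c) * t)) =
      c ^ α / (γ - α * r + α * c) := by
  have heq : ∀ t : ℝ, Real.exp (-γ * t) * c ^ α * Real.exp (α * (r - c) * t)
      = c ^ α * Real.exp (-((γ - α * r + α * c) * t)) := by
    intro t
    rw [mul_right_comm, ← Real.exp_add, mul_comm]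
    congr 1
    ring
  simp_rw [heq]
  rw [MeasureTheory.integral_const_mul, exp_neg_integral _ hK]
  ring

lemma key_ineq {α x : ℝ} (hα0 : 0 < α) (hα1 : α < 1) (hx : 0 ≤ x) :
    x ^ α ≤ (1 - α) + α * x := by
  have h := Real.geom_mean_le_arith_mean2_weighted hα0.le (by linarith : (0:ℝ) ≤ 1 - α)
    hx zero_le_one (by ring)
  simpa using h.trans_eq (by ring)

/-- For `0 < α < 1` and `γ > αr`, the supremum over `c > 0` of
`∫₀^∞ e^{-γt} c^α e^{α(r-c)t} dt` equals `((γ - αr)/(1-α))^{α-1}`, and it is attained at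
`c = (γ - αr)/(1-α)`. -/
theorem optimal_constant_consumption (α r γ : ℝ)
    (hα0 : 0 < α) (hα1 : α < 1) (hγ : α * r < γ) :
    IsGreatest
      ((fun c : ℝ => ∫ t in Set.Ioi (0 : ℝ),
          Real.exp (-γ * t) * c ^ α * Real.exp (α * (r - c) * t)) '' Set.Ioi 0)
      (((γ - α * r) / (1 - α)) ^ (α - 1)) ∧
    (∫ t in Set.Ioi (0 : ℝ),
        Real.exp (-γ * t) * ((γ - α * r) / (1 - α)) ^ α *
          Real.exp (α * (r - (γ - α * r) / (1 - α)) * t)) =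
      ((γ - α * r) / (1 - α)) ^ (α - 1) := by
  have h1α : (0:ℝ) < 1 - α := by linarith
  have hk : 0 < γ - α * r := by linarith
  set k := γ - α * r with hkdef
  set cs := k / (1 - α) with hcs
  have hcs0 : 0 < cs := div_pos hk h1α
  have hkcs : k = (1 - α) * cs := by rw [hcs]; field_simp [h1α.ne']
  have hKcs : k + α * cs = cs := by rw [hkcs]; ring
  have hval : (∫ t in Set.Ioi (0 : ℝ),
      Real.exp (-γ * t) * cs ^ α * Real.exp (α * (r - cs) * t)) = cs ^ (α - 1) := by
    rw [integral_eval α r γ cs (by rw [← hkdef]; linarith [hKcs, hcs0]), ← hkdef, hKcs,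
      Real.rpow_sub_one hcs0.ne']
  refine ⟨⟨⟨cs, hcs0, hval⟩, ?_⟩, hval⟩
  rintro y ⟨c, hc, rfl⟩
  have hc0 : (0:ℝ) < c := hc
  have hK : 0 < γ - α * r + α * c := by positivity
  simp only
  rw [integral_eval α r γ c hK, ← hkdef, div_le_iff₀ (by rw [← hkdef] at hK; exact hK)]
  have hxc : c = cs * (c / cs) := by field_simp
  have hx0 : 0 < c / cs := div_pos hc0 hcs0
  calc c ^ α = cs ^ α * (c / cs) ^ α := by
        rw [← Real.mul_rpow hcs0.le hx0.le, ← hxc]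
    _ ≤ cs ^ α * ((1 - α) + α * (c / cs)) := by
        exact mul_le_mul_of_nonneg_left (key_ineq hα0 hα1 hx0.le)
          (Real.rpow_nonneg hcs0.le α)
    _ = cs ^ (α - 1) * (k + α * c) := by
        rw [Real.rpow_sub_one hcs0.ne', hkcs]
        field_simp
end

section
/- Let r > 0, μ ∈ ℝ, σ > 0, α ∈ (0,1), γ ∈ ℝ, c ≥ 0, and let r_t = r·exp((μ - σ²/2)t + σW_t) be a geometric Brownian motion. Then E ∫₀^∞ e^{-γt + α∫₀ᵗ(r_s - c)ds} dt = +∞. -/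
open MeasureTheory ProbabilityTheory Real
open scoped NNReal ENNReal

namespace GBMAux


lemma gauss_pdf_mul_exp (v : ℝ≥0) (hv : v ≠ 0) (t x : ℝ) :
    rexp (t * x) * gaussianPDFReal 0 v x
      = rexp (t ^ 2 * v / 2) * gaussianPDFReal (t * v) v x := by
  have hv' : (v : ℝ) ≠ 0 := by exact_mod_cast hv
  simp only [gaussianPDFReal]
  have hexp : t * x + -(x - 0) ^ 2 / (2 * v) = t ^ 2 * v / 2 + -(x - t * v) ^ 2 / (2 * v) := by
    field_simp
    ring
  calc rexp (t * x) * ((√(2 * π * v))⁻¹ * rexp (-(x - 0) ^ 2 / (2 * v)))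
      = (√(2 * π * v))⁻¹ * rexp (t * x + -(x - 0) ^ 2 / (2 * v)) := by
        rw [Real.exp_add]; ring
    _ = (√(2 * π * v))⁻¹ * rexp (t ^ 2 * v / 2 + -(x - t * v) ^ 2 / (2 * v)) := by rw [hexp]
    _ = rexp (t ^ 2 * v / 2) * ((√(2 * π * v))⁻¹ * rexp (-(x - t * v) ^ 2 / (2 * v))) := by
        rw [Real.exp_add]; ring

lemma integrable_exp_gaussian (v : ℝ≥0) (t : ℝ) :
    Integrable (fun x => rexp (t * x)) (gaussianReal 0 v) := by
  by_cases hv : v = 0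
  · rw [hv, gaussianReal_zero_var]
    constructor
    · exact ((measurable_id.const_mul t).exp).aestronglyMeasurable
    · rw [HasFiniteIntegral,
        lintegral_dirac' _ (f := fun x => ‖rexp (t * x)‖ₑ)
          ((measurable_id'.const_mul t).exp).enorm]
      exact enorm_lt_top
  rw [gaussianReal_of_var_ne_zero _ hv, gaussianPDF_def]
  rw [integrable_withDensity_iff (measurable_gaussianPDFReal 0 v).ennreal_ofReal
    (ae_of_all _ fun x => ENNReal.ofReal_lt_top)]
  have heq : ∀ x, rexp (t * x) * (ENNReal.ofReal (gaussianPDFReal 0 v x)).toReal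
      = rexp (t ^ 2 * v / 2) * gaussianPDFReal (t * v) v x := by
    intro x
    rw [ENNReal.toReal_ofReal (gaussianPDFReal_nonneg _ _ _), gauss_pdf_mul_exp v hv]
  exact ((integrable_gaussianPDFReal (t * v) v).const_mul _).congr
    (ae_of_all _ fun x => (heq x).symm)

lemma integral_exp_gaussian (v : ℝ≥0) (t : ℝ) :
    ∫ x, rexp (t * x) ∂(gaussianReal 0 v) = rexp (t ^ 2 * v / 2) := by
  by_cases hv : v = 0
  · rw [hv, gaussianReal_zero_var, integral_dirac]
    simp
  rw [gaussianReal_of_var_ne_zero _ hv, gaussianPDF_def]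
  have h1 : (fun x => ENNReal.ofReal (gaussianPDFReal 0 v x))
      = fun x => ((gaussianPDFReal 0 v x).toNNReal : ℝ≥0∞) := rfl
  rw [h1, integral_withDensity_eq_integral_smul
    ((measurable_gaussianPDFReal 0 v).real_toNNReal) _]
  have h2 : ∀ x, (gaussianPDFReal 0 v x).toNNReal • rexp (t * x)
      = rexp (t ^ 2 * v / 2) * gaussianPDFReal (t * v) v x := by
    intro x
    rw [NNReal.smul_def, smul_eq_mul, Real.coe_toNNReal _ (gaussianPDFReal_nonneg _ _ _),
      mul_comm, gauss_pdf_mul_exp v hv]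
  simp_rw [h2]
  rw [integral_const_mul, integral_gaussianPDFReal_eq_one _ hv, mul_one]

lemma abs_le_exp_add_exp (x : ℝ) : |x| ≤ rexp x + rexp (-x) := by
  rcases le_total 0 x with h | h
  · rw [abs_of_nonneg h]
    have := Real.add_one_le_exp x
    have := Real.exp_pos (-x)
    linarith
  · rw [abs_of_nonpos h]
    have := Real.add_one_le_exp (-x)
    have := Real.exp_pos x
    linarith

lemma integrable_id_gaussian (v : ℝ≥0) : Integrable (fun x => x) (gaussianReal 0 v) := by
  have h1 := integrable_exp_gaussian v 1
  have h2 := integrable_exp_gaussian v (-1)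
  refine (h1.add h2).mono' measurable_id.aestronglyMeasurable (ae_of_all _ fun x => ?_)
  simp only [Real.norm_eq_abs, one_mul, neg_one_mul]
  exact abs_le_exp_add_exp x

lemma integrable_abs_gaussian (v : ℝ≥0) : Integrable (fun x => |x|) (gaussianReal 0 v) :=
  (integrable_id_gaussian v).abs

lemma integral_abs_gaussian_le (v : ℝ≥0) (hv : (v : ℝ) ≤ 1) :
    ∫ x, |x| ∂(gaussianReal 0 v) ≤ 2 * rexp 1 := by
  have h1 := integrable_exp_gaussian v 1
  have h2 := integrable_exp_gaussian v (-1)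
  have hle : ∫ x, |x| ∂(gaussianReal 0 v) ≤ ∫ x, (rexp (1 * x) + rexp ((-1) * x)) ∂(gaussianReal 0 v) := by
    refine integral_mono (integrable_abs_gaussian v) (h1.add h2) fun x => ?_
    simpa using abs_le_exp_add_exp x
  rw [integral_add h1 h2, integral_exp_gaussian, integral_exp_gaussian] at hle
  have hh : rexp (1 ^ 2 * v / 2) ≤ rexp 1 := by
    rw [Real.exp_le_exp]; nlinarith
  have hh2 : rexp ((-1) ^ 2 * v / 2) ≤ rexp 1 := by
    rw [Real.exp_le_exp]; nlinarith
  linarith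

lemma integral_id_gaussian (v : ℝ≥0) : ∫ x, x ∂(gaussianReal 0 v) = 0 := by
  have hmap : Measure.map (fun x => (-1 : ℝ) * x) (gaussianReal 0 v) = gaussianReal 0 v := by
    rw [gaussianReal_map_const_mul]
    congr 1
    · ring
    · ext
      norm_num
  have := integral_map (μ := gaussianReal 0 v) (φ := fun x => (-1 : ℝ) * x)
    (measurable_const_mul _).aemeasurable
    (f := fun x => x) (by rw [hmap]; exact measurable_id.aestronglyMeasurable)
  rw [hmap] at this
  simp only [neg_one_mul] at this
  rw [integral_neg] at this
  linarith [this]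

lemma ofReal_integral_le {α : Type*} [MeasurableSpace α] (μ : Measure α) {f : α → ℝ}
    (hf : Integrable f μ) :
    ENNReal.ofReal (∫ x, f x ∂μ) ≤ ∫⁻ x, ENNReal.ofReal (f x) ∂μ := by
  have h1 : ∫ x, f x ∂μ ≤ ∫ x, max (f x) 0 ∂μ :=
    integral_mono hf hf.pos_part fun x => le_max_left _ _
  refine le_trans (ENNReal.ofReal_le_ofReal h1) ?_
  rw [ofReal_integral_eq_lintegral_ofReal hf.pos_part (ae_of_all _ fun x => le_max_right _ _)]
  refine lintegral_mono fun x => ?_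
  rcases le_total 0 (f x) with h | h
  · rw [max_eq_left h]
  · rw [max_eq_right h]
    simp [ENNReal.ofReal_eq_zero.2 h]

lemma exp_setIntegral_le {b : ℝ} {g : ℝ → ℝ} (hg : Continuous g) :
    rexp (∫ s in Set.Ioc b (b + 1), g s) ≤ ∫ s in Set.Ioc b (b + 1), rexp (g s) := by
  set m := ∫ s in Set.Ioc b (b + 1), g s with hm
  have hgi : IntegrableOn g (Set.Ioc b (b + 1)) := hg.integrableOn_Ioc
  have hei : IntegrableOn (fun s => rexp (g s)) (Set.Ioc b (b + 1)) :=
    (Real.continuous_exp.comp hg).integrableOn_Ioc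
  have hvol : (volume (Set.Ioc b (b + 1))).toReal = 1 := by
    rw [Real.volume_Ioc]
    simp
  have hpt : ∀ s, rexp m * (g s - m) + rexp m ≤ rexp (g s) := by
    intro s
    have h := Real.add_one_le_exp (g s - m)
    have h2 : rexp m * ((g s - m) + 1) ≤ rexp m * rexp (g s - m) :=
      mul_le_mul_of_nonneg_left h (Real.exp_pos m).le
    rw [← Real.exp_add] at h2
    simpa [mul_add, add_sub_cancel] using h2
  have hconst : IntegrableOn (fun _ : ℝ => m) (Set.Ioc b (b + 1)) :=
    integrableOn_const (by rw [Real.volume_Ioc]; exact ENNReal.ofReal_ne_top)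
  have h1 : IntegrableOn (fun s => rexp m * (g s - m)) (Set.Ioc b (b + 1)) :=
    (hgi.sub hconst).const_mul (rexp m)
  have h2 : IntegrableOn (fun _ : ℝ => rexp m) (Set.Ioc b (b + 1)) :=
    integrableOn_const (by rw [Real.volume_Ioc]; exact ENNReal.ofReal_ne_top)
  have hlin : IntegrableOn (fun s => rexp m * (g s - m) + rexp m) (Set.Ioc b (b + 1)) :=
    h1.add h2
  have hmono : ∫ s in Set.Ioc b (b + 1), (rexp m * (g s - m) + rexp m)
      ≤ ∫ s in Set.Ioc b (b + 1), rexp (g s) :=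
    integral_mono hlin hei fun s => hpt s
  have hcomp : ∫ s in Set.Ioc b (b + 1), (rexp m * (g s - m) + rexp m) = rexp m := by
    rw [integral_add h1 h2, integral_const_mul, integral_sub hgi hconst, setIntegral_const,
      setIntegral_const, measureReal_def, hvol]
    simp [← hm]
  rw [hcomp] at hmono
  exact hmono

end GBMAux

/-- `W` is a standard one-dimensional Brownian motion on `(Ω, P)`: it starts at `0`, has
continuous paths, Gaussian increments `W_t - W_s ~ N(0, t - s)` for `0 ≤ s ≤ t`, and
independent increments. -/
def IsStandardBrownian {Ω : Type*} [MeasurableSpace Ω] (P : Measure Ω)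
    (W : ℝ → Ω → ℝ) : Prop :=
  (∀ ω, W 0 ω = 0) ∧
  (∀ ω, Continuous fun t => W t ω) ∧
  (∀ t, Measurable (W t)) ∧
  (∀ s t : ℝ, 0 ≤ s → s ≤ t →
    Measure.map (fun ω => W t ω - W s ω) P = gaussianReal 0 (Real.toNNReal (t - s))) ∧
  (∀ (n : ℕ) (u : Fin (n + 1) → ℝ), Monotone u → (∀ i, 0 ≤ u i) →
    iIndepFun (m := fun _ : Fin n => (inferInstance : MeasurableSpace ℝ))
      (fun i : Fin n => fun ω => W (u i.succ) ω - W (u i.castSucc) ω) P)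

set_option maxHeartbeats 2000000 in
/-- If the short rate is a geometric Brownian motion
`r_t = r·exp((μ - σ²/2)t + σW_t)` with `r > 0`, then for any constant consumption fraction
`c ≥ 0`, `E ∫₀^∞ e^{-γt + α∫₀ᵗ(r_s - c)ds} dt = +∞`. -/
theorem gbm_infinite_value {Ω : Type*} [MeasurableSpace Ω] (P : Measure Ω)
    [IsProbabilityMeasure P] (W : ℝ → Ω → ℝ) (hW : IsStandardBrownian P W)
    (hWmeas : Measurable fun p : ℝ × Ω => W p.1 p.2)
    (μ σ α γ c r : ℝ) (hr : 0 < r) (hσ : 0 < σ) (hα0 : 0 < α) (hα1 : α < 1)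
    (hc : 0 ≤ c) :
    (∫⁻ ω, (∫⁻ t in Set.Ioi (0 : ℝ),
        ENNReal.ofReal (Real.exp (-γ * t +
          α * ∫ s in Set.Ioc (0 : ℝ) t,
            (r * Real.exp ((μ - σ ^ 2 / 2) * s + σ * W s ω) - c)))) ∂P) = ⊤ := by
  obtain ⟨hW0, hWcont, hWm, hWlaw, hWindep⟩ := hW
  set a : ℝ := μ - σ ^ 2 / 2 with ha
  clear_value a
  obtain ⟨n, hnn⟩ := exists_nat_ge (max (2 * (|a| + 1) / σ ^ 2) (|γ| + α * c + 1))
  have hn1 : 2 * (|a| + 1) / σ ^ 2 ≤ n := le_trans (le_max_left _ _) hnn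
  have hn2 : |γ| + α * c + 1 ≤ n := le_trans (le_max_right _ _) hnn
  have hσ2 : (0:ℝ) < σ ^ 2 := by positivity
  have hn3 : 2 * (|a| + 1) ≤ n * σ ^ 2 := by
    rw [div_le_iff₀ hσ2] at hn1; linarith
  have hn0 : (1:ℝ) ≤ n := by
    have h1 := abs_nonneg γ
    have h2 := mul_nonneg hα0.le hc
    linarith
  have hrate : |γ| + α * c + n * |a| + 1 ≤ (n:ℝ) ^ 2 * σ ^ 2 / 2 := by
    nlinarith [hn3, hn2, hn0]
  set l : ℝ := n * σ with hl
  set C0 : ℝ := α ^ n * r ^ n / n.factorial with hC0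
  have hfacpos : (0:ℝ) < n.factorial := by exact_mod_cast n.factorial_pos
  have hC0pos : 0 < C0 := by rw [hC0]; positivity
  clear_value l C0
  have main : ∀ T : ℝ, 2 ≤ T →
      ENNReal.ofReal (C0 *
        rexp (-(|γ| + α * c) * (T + 1) + n * a * (T - 1/2) + l ^ 2 * (T - 1) / 2))
      ≤ ∫⁻ ω, (∫⁻ t in Set.Ioi (0 : ℝ),
        ENNReal.ofReal (Real.exp (-γ * t +
          α * ∫ s in Set.Ioc (0 : ℝ) t, (r * Real.exp (a * s + σ * W s ω) - c)))) ∂P := by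
    intro T hT
    have hT0 : (0:ℝ) ≤ T - 1 := by linarith
    have hT1 : (1:ℝ) ≤ T - 1 := by linarith
    set J : Set ℝ := Set.Ioc (T - 1) T with hJ
    set X : Ω → ℝ := fun ω => W (T - 1) ω with hX
    set Z : Ω → ℝ := fun ω => ∫ s in J, (W s ω - X ω) with hZ
    set D : ℝ := rexp (-(|γ| + α * c) * (T + 1)) * (α ^ n / n.factorial) * r ^ n *
      rexp (n * a * (T - 1/2)) with hD
    have hDpos : 0 < D := by positivity
    -- law of X
    have hXmap : Measure.map X P = gaussianReal 0 (T - 1).toNNReal := by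
      have h := hWlaw 0 (T - 1) le_rfl hT0
      simp only [hW0, sub_zero] at h
      exact h
    have hexpXint : Integrable (fun ω => rexp (l * X ω)) P := by
      have h := GBMAux.integrable_exp_gaussian (T - 1).toNNReal l
      rw [← hXmap] at h
      exact (integrable_map_measure
        ((measurable_id.const_mul l).exp).aestronglyMeasurable
        (hWm (T - 1)).aemeasurable).mp h
    have hexpXval : ∫ ω, rexp (l * X ω) ∂P = rexp (l ^ 2 * (T - 1) / 2) := by
      have h := integral_map (μ := P) (φ := X) (hWm (T - 1)).aemeasurable
        (f := fun x => rexp (l * x))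
        ((measurable_id.const_mul l).exp).aestronglyMeasurable
      rw [hXmap, GBMAux.integral_exp_gaussian] at h
      rw [← h, Real.coe_toNNReal _ hT0]
    -- facts for each s ∈ J
    have hsfact : ∀ s ∈ J,
        IndepFun (fun ω => W (T-1) ω) (fun ω => W s ω - W (T-1) ω) P ∧
        Measure.map (fun ω => W s ω - W (T-1) ω) P
          = gaussianReal 0 (s - (T-1)).toNNReal := by
      intro s hs
      have hs1 : T - 1 < s := hs.1
      have hs2 : s ≤ T := hs.2
      constructor
      · have hmono : Monotone ![(0:ℝ), T-1, s] := by
          rw [Fin.monotone_iff_le_succ, Fin.forall_fin_two]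
          exact ⟨show (0:ℝ) ≤ T - 1 by linarith, show T - 1 ≤ s by linarith⟩
        have hpos : ∀ i, (0:ℝ) ≤ ![(0:ℝ), T-1, s] i := by
          intro i
          match i with
          | 0 => exact le_rfl
          | 1 => show (0:ℝ) ≤ T - 1; linarith
          | 2 => show (0:ℝ) ≤ s; linarith
        have h := (hWindep 2 ![(0:ℝ), T-1, s] hmono hpos).indepFun
          (i := 0) (j := 1) (by decide)
        have e0 : (![(0:ℝ), T-1, s] (Fin.castSucc 0)) = 0 := rfl
        have e1 : (![(0:ℝ), T-1, s] (Fin.succ 0)) = T - 1 := rfl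
        have e2 : (![(0:ℝ), T-1, s] (Fin.castSucc 1)) = T - 1 := rfl
        have e3 : (![(0:ℝ), T-1, s] (Fin.succ 1)) = s := rfl
        rw [e0, e1, e2, e3] at h
        have hfun : (fun ω => W (T-1) ω - W 0 ω) = fun ω => W (T-1) ω := by
          funext ω; rw [hW0, sub_zero]
        rwa [hfun] at h
      · exact hWlaw (T-1) s (by linarith) hs1.le
    have hνfin : volume J < ⊤ := measure_Ioc_lt_top
    have hindexp : ∀ s ∈ J,
        IndepFun (fun ω => rexp (l * X ω)) (fun ω => W s ω - X ω) P := by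
      intro s hs
      exact ((hsfact s hs).1).comp ((measurable_id.const_mul l).exp) measurable_id
    have hΔint : ∀ s ∈ J, Integrable (fun ω => W s ω - X ω) P := by
      intro s hs
      have h := GBMAux.integrable_id_gaussian (s - (T-1)).toNNReal
      rw [← (hsfact s hs).2] at h
      exact (integrable_map_measure measurable_id.aestronglyMeasurable
        ((hWm s).sub (hWm (T-1))).aemeasurable).mp h
    have hEΔ : ∀ s ∈ J, ∫ ω, (W s ω - X ω) ∂P = 0 := by
      intro s hs
      have h := integral_map (μ := P) (φ := fun ω => W s ω - W (T-1) ω)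
        ((hWm s).sub (hWm (T-1))).aemeasurable
        (f := fun x : ℝ => x) measurable_id.aestronglyMeasurable
      rw [(hsfact s hs).2, GBMAux.integral_id_gaussian] at h
      exact h.symm
    have hEabs : ∀ s ∈ J, ∫ ω, |W s ω - X ω| ∂P ≤ 2 * rexp 1 := by
      intro s hs
      have h := integral_map (μ := P) (φ := fun ω => W s ω - W (T-1) ω)
        ((hWm s).sub (hWm (T-1))).aemeasurable
        (f := fun x : ℝ => |x|) measurable_abs.aestronglyMeasurable
      rw [(hsfact s hs).2] at h
      rw [← h]
      apply GBMAux.integral_abs_gaussian_le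
      rw [Real.coe_toNNReal']
      exact max_le (by linarith [hs.2]) zero_le_one
    -- product integrability
    have humeas : Measurable (fun p : Ω × ℝ => rexp (l * X p.1) * (W p.2 p.1 - X p.1)) := by
      have h1 : Measurable fun p : Ω × ℝ => X p.1 := (hWm (T-1)).comp measurable_fst
      have h2 : Measurable fun p : Ω × ℝ => W p.2 p.1 := hWmeas.comp measurable_swap
      exact ((h1.const_mul l).exp).mul (h2.sub h1)
    have huint : Integrable (fun p : Ω × ℝ => rexp (l * X p.1) * (W p.2 p.1 - X p.1))
        (P.prod (volume.restrict J)) := by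
      rw [integrable_prod_iff' humeas.aestronglyMeasurable]
      constructor
      · refine (ae_restrict_iff' measurableSet_Ioc).2 (ae_of_all _ fun s hs => ?_)
        exact (hindexp s hs).integrable_mul hexpXint (hΔint s hs)
      · have hbound : ∀ᵐ s ∂(volume.restrict J),
            ‖∫ ω, ‖rexp (l * X ω) * (W s ω - X ω)‖ ∂P‖
              ≤ rexp (l ^ 2 * (T - 1) / 2) * (2 * rexp 1) := by
          refine (ae_restrict_iff' measurableSet_Ioc).2 (ae_of_all _ fun s hs => ?_)
          have habs : ∀ ω, ‖rexp (l * X ω) * (W s ω - X ω)‖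
              = rexp (l * X ω) * |W s ω - X ω| := by
            intro ω
            rw [norm_mul, Real.norm_eq_abs, Real.norm_eq_abs,
              abs_of_pos (Real.exp_pos _)]
          simp_rw [habs]
          have hint : IndepFun (fun ω => rexp (l * X ω)) (fun ω => |W s ω - X ω|) P :=
            ((hsfact s hs).1).comp ((measurable_id.const_mul l).exp) measurable_abs
          have hprod : ∫ ω, rexp (l * X ω) * |W s ω - X ω| ∂P
              = (∫ ω, rexp (l * X ω) ∂P) * ∫ ω, |W s ω - X ω| ∂P :=
            hint.integral_fun_mul_eq_mul_integral
              ((measurable_id.const_mul l).exp.comp (hWm (T-1))).aestronglyMeasurable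
              (((hWm s).sub (hWm (T-1))).abs).aestronglyMeasurable
          rw [Real.norm_eq_abs, abs_of_nonneg (integral_nonneg fun ω => by positivity)]
          rw [hprod, hexpXval]
          exact mul_le_mul_of_nonneg_left (hEabs s hs) (Real.exp_pos _).le
        refine Integrable.mono'
          (g := fun _ : ℝ => rexp (l ^ 2 * (T - 1) / 2) * (2 * rexp 1))
          (integrableOn_const hνfin.ne) ?_ hbound
        have hsw : AEStronglyMeasurable
            (fun q : ℝ × Ω => ‖rexp (l * X q.2) * (W q.1 q.2 - X q.2)‖)
            ((volume.restrict J).prod P) :=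
          ((humeas.comp measurable_swap).norm).aestronglyMeasurable
        exact hsw.integral_prod_right'
    have hGZint : Integrable (fun ω => rexp (l * X ω) * Z ω) P := by
      have h := huint.integral_prod_left
      refine h.congr (ae_of_all _ fun ω => ?_)
      simp only [hZ]
      rw [integral_const_mul]
    have hEcross : ∫ ω, rexp (l * X ω) * Z ω ∂P = 0 := by
      have h1 : (fun ω => rexp (l * X ω) * Z ω)
          = fun ω => ∫ s in J, rexp (l * X ω) * (W s ω - X ω) := by
        funext ω
        rw [integral_const_mul]
      rw [h1, integral_integral_swap huint]
      have h2 : ∀ s ∈ J, ∫ ω, rexp (l * X ω) * (W s ω - X ω) ∂P = 0 := by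
        intro s hs
        have h3 : ∫ ω, rexp (l * X ω) * (W s ω - X ω) ∂P
            = (∫ ω, rexp (l * X ω) ∂P) * ∫ ω, (W s ω - X ω) ∂P :=
          (hindexp s hs).integral_fun_mul_eq_mul_integral
            ((measurable_id.const_mul l).exp.comp (hWm (T-1))).aestronglyMeasurable
            ((hWm s).sub (hWm (T-1))).aestronglyMeasurable
        rw [h3, hEΔ s hs, mul_zero]
      calc ∫ s in J, (∫ ω, rexp (l * X ω) * (W s ω - X ω) ∂P)
          = ∫ s in J, (0:ℝ) :=
            setIntegral_congr_fun measurableSet_Ioc fun s hs => h2 s hs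
        _ = 0 := by simp
    set φ : Ω → ℝ := fun ω => rexp (l * X ω) * (1 + l * Z ω) with hφ
    have hφint : Integrable φ P := by
      have h := hexpXint.add (hGZint.const_mul l)
      refine h.congr (ae_of_all _ fun ω => ?_)
      simp only [hφ, Pi.add_apply]
      ring
    have hφval : ∫ ω, φ ω ∂P = rexp (l ^ 2 * (T - 1) / 2) := by
      have h1 : (fun ω => φ ω)
          = fun ω => rexp (l * X ω) + l * (rexp (l * X ω) * Z ω) := by
        funext ω; simp only [hφ]; ring
      rw [h1, integral_add hexpXint (hGZint.const_mul l), integral_const_mul, hEcross,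
        hexpXval, mul_zero, add_zero]
    -- pathwise bound
    have hpath : ∀ ω, ∀ t ∈ Set.Ioc T (T + 1),
        D * φ ω ≤ rexp (-γ * t +
          α * ∫ s in Set.Ioc (0:ℝ) t, (r * rexp (a * s + σ * W s ω) - c)) := by
      intro ω t ht
      have ht1 : T < t := ht.1
      have ht2 : t ≤ T + 1 := ht.2
      have htpos : (0:ℝ) < t := by linarith
      have hcf : Continuous fun s => r * rexp (a * s + σ * W s ω) :=
        continuous_const.mul (Real.continuous_exp.comp
          ((continuous_const.mul continuous_id).add
            (continuous_const.mul (hWcont ω))))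
      have hfi : IntegrableOn (fun s => r * rexp (a * s + σ * W s ω)) (Set.Ioc 0 t) :=
        hcf.integrableOn_Ioc
      have hsplit : ∫ s in Set.Ioc (0:ℝ) t, (r * rexp (a * s + σ * W s ω) - c)
          = (∫ s in Set.Ioc (0:ℝ) t, r * rexp (a * s + σ * W s ω)) - c * t := by
        rw [integral_sub hfi (integrableOn_const measure_Ioc_lt_top.ne),
          setIntegral_const, measureReal_def, Real.volume_Ioc, smul_eq_mul,
          ENNReal.toReal_ofReal (by linarith : (0:ℝ) ≤ t - 0)]
        ring
      set Y : ℝ := ∫ s in J, r * rexp (a * s + σ * W s ω) with hY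
      have hY0 : 0 ≤ Y := setIntegral_nonneg measurableSet_Ioc fun s _ => by positivity
      have hYle : Y ≤ ∫ s in Set.Ioc (0:ℝ) t, r * rexp (a * s + σ * W s ω) := by
        refine setIntegral_mono_set hfi (ae_of_all _ fun s => by positivity) ?_
        refine HasSubset.Subset.eventuallyLE fun x hx => ?_
        exact ⟨by linarith [hx.1], by linarith [hx.2]⟩
      have hYeq : Y = (r * rexp (σ * X ω)) *
          ∫ s in J, rexp (a * s + σ * (W s ω - X ω)) := by
        rw [← integral_const_mul]
        refine setIntegral_congr_fun measurableSet_Ioc fun s _ => ?_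
        have he : a * s + σ * W s ω = σ * X ω + (a * s + σ * (W s ω - X ω)) := by ring
        rw [he, Real.exp_add]
        ring
      have hcg : Continuous fun s => a * s + σ * (W s ω - X ω) :=
        (continuous_const.mul continuous_id).add
          (continuous_const.mul ((hWcont ω).sub continuous_const))
      have hVlb : rexp (a * (T - 1/2) + σ * Z ω)
          ≤ ∫ s in J, rexp (a * s + σ * (W s ω - X ω)) := by
        have hJ2 : J = Set.Ioc (T - 1) ((T - 1) + 1) := by rw [sub_add_cancel]
        have h := GBMAux.exp_setIntegral_le (b := T - 1) hcg
        rw [← hJ2] at h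
        have hint1 : IntegrableOn (fun s => a * s) J :=
          (continuous_const.mul continuous_id).integrableOn_Ioc
        have hint2 : IntegrableOn (fun s => σ * (W s ω - X ω)) J :=
          (continuous_const.mul ((hWcont ω).sub continuous_const)).integrableOn_Ioc
        have hid : ∫ s in J, s = T - 1/2 := by
          rw [hJ, ← intervalIntegral.integral_of_le (by linarith : T - 1 ≤ T),
            integral_id]
          ring
        have hsplit2 : ∫ s in J, (a * s + σ * (W s ω - X ω))
            = a * (T - 1/2) + σ * Z ω := by
          rw [integral_add hint1 hint2, integral_const_mul, integral_const_mul, hid]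
        rw [hsplit2] at h
        exact h
      have hYlb : (r * rexp (σ * X ω)) * rexp (a * (T - 1/2) + σ * Z ω) ≤ Y := by
        rw [hYeq]
        exact mul_le_mul_of_nonneg_left hVlb (by positivity)
      have hYlb0 : 0 ≤ (r * rexp (σ * X ω)) * rexp (a * (T - 1/2) + σ * Z ω) := by
        positivity
      have hpow : ((r * rexp (σ * X ω)) * rexp (a * (T - 1/2) + σ * Z ω)) ^ n ≤ Y ^ n :=
        pow_le_pow_left₀ hYlb0 hYlb n
      have hexp_pow : (α * Y) ^ n / n.factorial ≤ rexp (α * Y) := by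
        have hx : 0 ≤ α * Y := mul_nonneg hα0.le hY0
        have hsum := Real.sum_le_exp_of_nonneg hx (n + 1)
        have hterm : (α * Y) ^ n / n.factorial
            ≤ ∑ i ∈ Finset.range (n + 1), (α * Y) ^ i / i.factorial := by
          refine Finset.single_le_sum (f := fun i => (α * Y) ^ i / i.factorial)
            (fun i _ => by positivity) (Finset.self_mem_range_succ n)
        exact le_trans hterm hsum
      have hexpand : ((r * rexp (σ * X ω)) * rexp (a * (T - 1/2) + σ * Z ω)) ^ n
          = r ^ n * rexp (n * a * (T - 1/2)) * (rexp (l * X ω) * rexp (l * Z ω)) := by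
        calc ((r * rexp (σ * X ω)) * rexp (a * (T - 1/2) + σ * Z ω)) ^ n
            = r ^ n * rexp ((n:ℝ) * (σ * X ω) + (n:ℝ) * (a * (T - 1/2) + σ * Z ω)) := by
              rw [mul_pow, mul_pow, ← Real.exp_nat_mul, ← Real.exp_nat_mul, mul_assoc,
                ← Real.exp_add]
          _ = r ^ n * rexp (n * a * (T - 1/2)) * (rexp (l * X ω) * rexp (l * Z ω)) := by
              rw [mul_assoc, ← Real.exp_add, ← Real.exp_add, hl]
              congr 1
              ring
      have h1Z : rexp (l * X ω) * (1 + l * Z ω) ≤ rexp (l * X ω) * rexp (l * Z ω) := by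
        refine mul_le_mul_of_nonneg_left ?_ (Real.exp_pos _).le
        linarith [Real.add_one_le_exp (l * Z ω)]
      have hexpo : -(|γ| + α * c) * (T + 1) + α * Y
          ≤ -γ * t + α * ∫ s in Set.Ioc (0:ℝ) t, (r * rexp (a * s + σ * W s ω) - c) := by
        rw [hsplit]
        have hg1 : -γ * t ≥ -(|γ|) * (T + 1) := by
          nlinarith [le_abs_self γ, neg_abs_le γ, abs_nonneg γ]
        have hg2 : α * (∫ s in Set.Ioc (0:ℝ) t, r * rexp (a * s + σ * W s ω))
            ≥ α * Y := mul_le_mul_of_nonneg_left hYle hα0.le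
        have hg3 : α * c * t ≤ α * c * (T + 1) := by
          have := mul_nonneg hα0.le hc
          nlinarith
        nlinarith
      calc D * φ ω
          = rexp (-(|γ| + α * c) * (T + 1)) *
            ((α ^ n / n.factorial) *
              (r ^ n * rexp (n * a * (T - 1/2)) * (rexp (l * X ω) * (1 + l * Z ω)))) := by
            rw [hD, hφ]; ring
        _ ≤ rexp (-(|γ| + α * c) * (T + 1)) *
            ((α ^ n / n.factorial) *
              (r ^ n * rexp (n * a * (T - 1/2)) * (rexp (l * X ω) * rexp (l * Z ω)))) := by
            have hcst : (0:ℝ) ≤ rexp (-(|γ| + α * c) * (T + 1)) * ((α ^ n / n.factorial)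
                * (r ^ n * rexp (n * a * (T - 1/2)))) := by positivity
            have := mul_le_mul_of_nonneg_left h1Z hcst
            calc rexp (-(|γ| + α * c) * (T + 1)) * ((α ^ n / n.factorial) *
                  (r ^ n * rexp (n * a * (T - 1/2)) * (rexp (l * X ω) * (1 + l * Z ω))))
                = rexp (-(|γ| + α * c) * (T + 1)) * ((α ^ n / n.factorial)
                  * (r ^ n * rexp (n * a * (T - 1/2)))) * (rexp (l * X ω) * (1 + l * Z ω)) := by
                  ring
              _ ≤ rexp (-(|γ| + α * c) * (T + 1)) * ((α ^ n / n.factorial)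
                  * (r ^ n * rexp (n * a * (T - 1/2)))) * (rexp (l * X ω) * rexp (l * Z ω)) :=
                  this
              _ = rexp (-(|γ| + α * c) * (T + 1)) * ((α ^ n / n.factorial) *
                  (r ^ n * rexp (n * a * (T - 1/2)) * (rexp (l * X ω) * rexp (l * Z ω)))) := by
                  ring
        _ = rexp (-(|γ| + α * c) * (T + 1)) * ((α ^ n / n.factorial) *
              ((r * rexp (σ * X ω)) * rexp (a * (T - 1/2) + σ * Z ω)) ^ n) := by
            rw [hexpand]
        _ ≤ rexp (-(|γ| + α * c) * (T + 1)) * ((α ^ n / n.factorial) * Y ^ n) := by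
            refine mul_le_mul_of_nonneg_left (mul_le_mul_of_nonneg_left hpow ?_)
              (Real.exp_pos _).le
            positivity
        _ = rexp (-(|γ| + α * c) * (T + 1)) * ((α * Y) ^ n / n.factorial) := by
            rw [mul_pow]; ring
        _ ≤ rexp (-(|γ| + α * c) * (T + 1)) * rexp (α * Y) :=
            mul_le_mul_of_nonneg_left hexp_pow (Real.exp_pos _).le
        _ = rexp (-(|γ| + α * c) * (T + 1) + α * Y) := (Real.exp_add _ _).symm
        _ ≤ rexp (-γ * t +
              α * ∫ s in Set.Ioc (0:ℝ) t, (r * rexp (a * s + σ * W s ω) - c)) :=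
            Real.exp_le_exp.2 hexpo
    -- from pathwise bound to the double integral
    have hω : ∀ ω, ENNReal.ofReal (D * φ ω)
        ≤ ∫⁻ t in Set.Ioi (0:ℝ), ENNReal.ofReal (rexp (-γ * t +
            α * ∫ s in Set.Ioc (0:ℝ) t, (r * rexp (a * s + σ * W s ω) - c))) := by
      intro ω
      have hsub : Set.Ioc T (T + 1) ⊆ Set.Ioi (0:ℝ) := fun x hx => by
        simp only [Set.mem_Ioi]
        linarith [hx.1]
      calc ENNReal.ofReal (D * φ ω)
          = ∫⁻ _ in Set.Ioc T (T + 1), ENNReal.ofReal (D * φ ω) := by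
            rw [setLIntegral_const, Real.volume_Ioc]
            norm_num
        _ ≤ ∫⁻ t in Set.Ioc T (T + 1), ENNReal.ofReal (rexp (-γ * t +
              α * ∫ s in Set.Ioc (0:ℝ) t, (r * rexp (a * s + σ * W s ω) - c))) :=
            lintegral_mono_ae ((ae_restrict_iff' measurableSet_Ioc).2
              (ae_of_all _ fun t ht => ENNReal.ofReal_le_ofReal (hpath ω t ht)))
        _ ≤ ∫⁻ t in Set.Ioi (0:ℝ), ENNReal.ofReal (rexp (-γ * t +
              α * ∫ s in Set.Ioc (0:ℝ) t, (r * rexp (a * s + σ * W s ω) - c))) :=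
            lintegral_mono_set hsub
    have hDφ : ∫ ω, D * φ ω ∂P = D * rexp (l ^ 2 * (T - 1) / 2) := by
      rw [integral_const_mul, hφval]
    calc ENNReal.ofReal (C0 *
          rexp (-(|γ| + α * c) * (T + 1) + n * a * (T - 1/2) + l ^ 2 * (T - 1) / 2))
        = ENNReal.ofReal (D * rexp (l ^ 2 * (T - 1) / 2)) := by
          congr 1
          rw [hD, hC0, Real.exp_add, Real.exp_add]
          ring
      _ = ENNReal.ofReal (∫ ω, D * φ ω ∂P) := by rw [hDφ]
      _ ≤ ∫⁻ ω, ENNReal.ofReal (D * φ ω) ∂P :=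
          GBMAux.ofReal_integral_le P (hφint.const_mul D)
      _ ≤ _ := lintegral_mono hω
  -- conclusion
  by_contra hne
  set ρ : ℝ := -(|γ| + α * c) + n * a + l ^ 2 / 2 with hρ
  clear_value ρ
  have hρ1 : 1 ≤ ρ := by
    rw [hρ, hl]
    have hna : -((n:ℝ) * |a|) ≤ (n:ℝ) * a := by
      have h0n : (0:ℝ) ≤ (n:ℝ) := by linarith
      nlinarith [neg_abs_le a]
    have hsq : ((n:ℝ) * σ) ^ 2 = (n:ℝ) ^ 2 * σ ^ 2 := by ring
    linarith [hrate, hna, hsq.ge, hsq.le]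
  set c1 : ℝ := -(|γ| + α * c) - n * a / 2 - l ^ 2 / 2 with hc1
  set I := ∫⁻ ω, (∫⁻ t in Set.Ioi (0 : ℝ),
        ENNReal.ofReal (Real.exp (-γ * t +
          α * ∫ s in Set.Ioc (0 : ℝ) t,
            (r * Real.exp (a * s + σ * W s ω) - c)))) ∂P with hI
  set M : ℝ := I.toReal + 1 with hM
  set T0 : ℝ := max 2 (Real.log (max M 1 / C0) - c1) with hT0def
  have hT02 : (2:ℝ) ≤ T0 := le_max_left _ _
  have hbound := main T0 hT02
  have hMle : M ≤ C0 *
      rexp (-(|γ| + α * c) * (T0 + 1) + n * a * (T0 - 1/2) + l ^ 2 * (T0 - 1) / 2) := by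
    have hee : -(|γ| + α * c) * (T0 + 1) + n * a * (T0 - 1/2) + l ^ 2 * (T0 - 1) / 2
        = ρ * T0 + c1 := by
      rw [hρ, hc1]; ring
    rw [hee]
    have h1 : Real.log (max M 1 / C0) - c1 ≤ T0 := le_max_right _ _
    have hT00 : (0:ℝ) ≤ T0 := by linarith
    have h2 : Real.log (max M 1 / C0) ≤ ρ * T0 + c1 := by
      nlinarith [hρ1, hT00, mul_nonneg (by linarith : (0:ℝ) ≤ ρ - 1) hT00]
    have hpos : (0:ℝ) < max M 1 / C0 := by
      have : (0:ℝ) < max M 1 := lt_of_lt_of_le zero_lt_one (le_max_right _ _)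
      positivity
    have h3 : max M 1 / C0 ≤ rexp (ρ * T0 + c1) := by
      rw [← Real.exp_log hpos]
      exact Real.exp_le_exp.2 h2
    calc M ≤ max M 1 := le_max_left _ _
      _ = C0 * (max M 1 / C0) := by field_simp
      _ ≤ C0 * rexp (ρ * T0 + c1) := mul_le_mul_of_nonneg_left h3 hC0pos.le
  have hfin : ENNReal.ofReal M ≤ I := le_trans (ENNReal.ofReal_le_ofReal hMle) hbound
  rw [← ENNReal.ofReal_toReal hne] at hfin
  have := (ENNReal.ofReal_le_ofReal_iff ENNReal.toReal_nonneg).1 hfin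
  rw [hM] at this
  linarith
end

section
/- Let 0 < α < 1, b > 0, γ real, and ρ = (1/(1-α))(γ - αa/b - α²σ²/(2(1-α)b²)) > 0, where a, σ > 0 are the Vasicek parameters. For the Vasicek process r_t = re^{-bt} + (a/b)(1-e^{-bt}) + σX_t with X_t = ∫₀ᵗ e^{-b(t-s)}dW_s, the function N(r) = E^r ∫₀^∞ e^{(1/(1-α))(-γt + α∫₀ᵗ r_s ds)} dt is finite and satisfies N(r) ≤ e^{α|r|/((1-α)b)} / ρ for all r ∈ ℝ. -/
open MeasureTheory ProbabilityTheory Real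
open scoped NNReal ENNReal

-- exp integral on Ioi 0
lemma exp_neg_mul_Ioi {ρ : ℝ} (hρ : 0 < ρ) :
    ∫ t in Set.Ioi (0:ℝ), Real.exp (-(ρ * t)) = ρ⁻¹ := by
  have := integral_comp_mul_left_Ioi (fun x => Real.exp (-x)) 0 hρ
  simp only [mul_zero, integral_exp_neg_Ioi_zero, smul_eq_mul, mul_one] at this
  exact this

lemma lintegral_exp_neg_mul_Ioi {ρ : ℝ} (hρ : 0 < ρ) :
    ∫⁻ t in Set.Ioi (0:ℝ), ENNReal.ofReal (Real.exp (-(ρ * t))) = ENNReal.ofReal ρ⁻¹ := by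
  rw [← exp_neg_mul_Ioi hρ, ← ofReal_integral_eq_lintegral_ofReal]
  · have h := exp_neg_integrableOn_Ioi 0 hρ
    exact (by simpa [neg_mul] using h : IntegrableOn (fun x : ℝ => Real.exp (-(ρ * x))) (Set.Ioi 0))
  · exact Filter.Eventually.of_forall fun x => (Real.exp_pos _).le

-- gaussian mgf
lemma lintegral_exp_gaussian (u : ℝ) (v : ℝ≥0) :
    ∫⁻ x, ENNReal.ofReal (Real.exp (u * x)) ∂(gaussianReal 0 v) =
      ENNReal.ofReal (Real.exp (u ^ 2 * v / 2)) := by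
  rcases eq_or_ne v 0 with hv | hv
  · subst hv
    rw [gaussianReal_zero_var, lintegral_dirac]
    simp
  · rw [gaussianReal_of_var_ne_zero _ hv,
      lintegral_withDensity_eq_lintegral_mul _ (measurable_gaussianPDF _ _)
        (by fun_prop)]
    have key : ∀ x : ℝ, gaussianPDF 0 v x * ENNReal.ofReal (Real.exp (u * x)) =
        ENNReal.ofReal (Real.exp (u ^ 2 * v / 2)) * gaussianPDF (u * v) v x := by
      intro x
      rw [gaussianPDF, gaussianPDF, ← ENNReal.ofReal_mul (gaussianPDFReal_nonneg _ _ _),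
        ← ENNReal.ofReal_mul (Real.exp_pos _).le]
      congr 1
      rw [gaussianPDFReal, gaussianPDFReal, mul_assoc,
        mul_left_comm (Real.exp (u ^ 2 * v / 2))]
      congr 1
      rw [← Real.exp_add, ← Real.exp_add]
      congr 1
      have hv' : (0:ℝ) < v := by positivity
      field_simp
      ring
    simp_rw [Pi.mul_apply, key]
    rw [lintegral_const_mul _ (measurable_gaussianPDF _ _), lintegral_gaussianPDF_eq_one _ hv,
      mul_one]

-- variance bound : toNNReal w ≤ t / b ^ 2
lemma var_bound {b t : ℝ} (hb : 0 < b) (ht : 0 ≤ t) :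
    ((Real.toNNReal ((1 / b ^ 2) *
      (t - 3 / (2 * b) + (2 / b) * Real.exp (-b * t)
        - (1 / (2 * b)) * Real.exp (-2 * b * t))) : ℝ≥0) : ℝ) ≤ t / b ^ 2 := by
  rw [Real.coe_toNNReal']
  have hy1 : Real.exp (-b * t) ≤ 1 := Real.exp_le_one_iff.mpr (by nlinarith)
  have hy0 : 0 < Real.exp (-b * t) := Real.exp_pos _
  have h2 : Real.exp (-2 * b * t) = Real.exp (-b * t) ^ 2 := by
    rw [← Real.exp_nat_mul]; ring_nf
  have hb2 : (0:ℝ) < b ^ 2 := by positivity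
  have key : t - 3 / (2 * b) + (2 / b) * Real.exp (-b * t)
      - (1 / (2 * b)) * Real.exp (-2 * b * t) ≤ t := by
    rw [h2]
    set y := Real.exp (-b * t) with hy
    have hfac : 3 / (2*b) - (2/b) * y + (1/(2*b)) * y^2 = (1-y)*(3-y)/(2*b) := by
      field_simp; ring
    have hpos : 0 ≤ (1-y)*(3-y)/(2*b) :=
      div_nonneg (mul_nonneg (by linarith) (by linarith)) (by positivity)
    rw [← hfac] at hpos
    linarith
  have ht' : (0:ℝ) ≤ t / b ^ 2 := by positivity
  rcases le_total ((1 / b ^ 2) * (t - 3 / (2 * b) + (2 / b) * Real.exp (-b * t)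
        - (1 / (2 * b)) * Real.exp (-2 * b * t))) 0 with h | h
  · rw [max_eq_right h]; exact ht'
  · rw [max_eq_left h]
    have h5 := mul_le_mul_of_nonneg_left key
      (by positivity : (0:ℝ) ≤ 1 / b ^ 2)
    have h6 : 1 / b ^ 2 * t = t / b ^ 2 := by ring
    linarith

-- deterministic integral bound
lemma det_bound {a b : ℝ} (r : ℝ) (ha : 0 < a) (hb : 0 < b) {t : ℝ} (ht : 0 < t) :
    ∫ s in Set.Ioc (0:ℝ) t, (r * Real.exp (-b * s) + (a / b) * (1 - Real.exp (-b * s)))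
      ≤ |r| / b + (a / b) * t := by
  have hcont : Continuous fun s : ℝ => r * Real.exp (-b * s) + (a / b) * (1 - Real.exp (-b * s)) :=
    by fun_prop
  have hcont2 : Continuous fun s : ℝ => |r| * Real.exp (-b * s) + a / b := by fun_prop
  have h1 : ∫ s in Set.Ioc (0:ℝ) t, (r * Real.exp (-b * s) + (a / b) * (1 - Real.exp (-b * s)))
      ≤ ∫ s in Set.Ioc (0:ℝ) t, (|r| * Real.exp (-b * s) + a / b) := by
    apply setIntegral_mono_on (hcont.integrableOn_Ioc) (hcont2.integrableOn_Ioc)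
      measurableSet_Ioc
    intro s _
    have h0 : 0 < Real.exp (-b * s) := Real.exp_pos _
    have : r * Real.exp (-b * s) ≤ |r| * Real.exp (-b * s) :=
      mul_le_mul_of_nonneg_right (le_abs_self r) h0.le
    nlinarith [div_pos ha hb]
  refine h1.trans ?_
  rw [integral_add ((by fun_prop : Continuous fun s : ℝ => |r| * Real.exp (-b * s)).integrableOn_Ioc)
    (integrableOn_const (C := a / b) (s := Set.Ioc (0:ℝ) t) (μ := volume) measure_Ioc_lt_top.ne), integral_const, integral_const_mul]
  have h2 : ∫ s in Set.Ioc (0:ℝ) t, Real.exp (-b * s) ≤ b⁻¹ := by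
    have hint : IntegrableOn (fun s => Real.exp (-b * s)) (Set.Ioi (0:ℝ)) := by
      simpa [neg_mul] using exp_neg_integrableOn_Ioi 0 hb
    have hsub : ∫ s in Set.Ioc (0:ℝ) t, Real.exp (-b * s)
        ≤ ∫ s in Set.Ioi (0:ℝ), Real.exp (-b * s) := by
      apply setIntegral_mono_set hint
        (Filter.Eventually.of_forall fun s => (Real.exp_pos _).le)
        (HasSubset.Subset.eventuallyLE Set.Ioc_subset_Ioi_self)
    refine hsub.trans_eq ?_
    have := integral_comp_mul_left_Ioi (fun x => Real.exp (-x)) 0 hb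
    simp only [mul_zero, integral_exp_neg_Ioi_zero, smul_eq_mul, mul_one, neg_mul] at this ⊢
    exact this
  rw [measureReal_def, Measure.restrict_apply_univ]
  have hmeas : (volume (Set.Ioc (0:ℝ) t)).toReal = t := by
    simp [Real.volume_Ioc, ht.le]
  rw [hmeas, smul_eq_mul]
  have h7 := mul_le_mul_of_nonneg_left h2 (abs_nonneg r)
  have habs : |r| * b⁻¹ = |r| / b := by rw [div_eq_mul_inv]
  have h8 : t * (a / b) = a / b * t := by ring
  linarith

set_option maxHeartbeats 1000000 in
/-- (Vasicek model.) Let `a, b, σ > 0`, `0 < α < 1` and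
`ρ = (1/(1-α))(γ - αa/b - α²σ²/(2(1-α)b²)) > 0`. Let `(X_t)` be the Ornstein–Uhlenbeck
integral process, i.e. a measurable process with continuous paths such that
`∫₀ᵗ X_s ds ~ N(0, (1/b²)(t - 3/(2b) + (2/b)e^{-bt} - (1/(2b))e^{-2bt}))` for all `t ≥ 0`.
Then for the Vasicek short rate `r_t = re^{-bt} + (a/b)(1-e^{-bt}) + σX_t`, the quantity
`N(r) = E^r ∫₀^∞ e^{(1/(1-α))(-γt + α∫₀ᵗ r_s ds)} dt` is finite and satisfies
`N(r) ≤ e^{α|r|/((1-α)b)} / ρ` for every `r ∈ ℝ`. -/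
theorem vasicek_N_bound {Ω : Type*} [MeasurableSpace Ω] (P : Measure Ω)
    [IsProbabilityMeasure P] (a b σ α γ : ℝ)
    (ha : 0 < a) (hb : 0 < b) (hσ : 0 < σ) (hα0 : 0 < α) (hα1 : α < 1)
    (hρ : 0 < (1 / (1 - α)) * (γ - α * a / b - α ^ 2 * σ ^ 2 / (2 * (1 - α) * b ^ 2)))
    (X : ℝ → Ω → ℝ)
    (hXmeas : Measurable fun p : ℝ × Ω => X p.1 p.2)
    (hXcont : ∀ᵐ ω ∂P, Continuous fun s => X s ω)
    (hYlaw : ∀ t : ℝ, 0 ≤ t →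
      Measure.map (fun ω => ∫ s in Set.Ioc (0 : ℝ) t, X s ω) P =
        gaussianReal 0 (Real.toNNReal ((1 / b ^ 2) *
          (t - 3 / (2 * b) + (2 / b) * Real.exp (-b * t)
            - (1 / (2 * b)) * Real.exp (-2 * b * t))))) :
    ∀ r : ℝ,
      (∫⁻ ω, (∫⁻ t in Set.Ioi (0 : ℝ),
        ENNReal.ofReal (Real.exp ((1 / (1 - α)) * (-γ * t +
          α * ∫ s in Set.Ioc (0 : ℝ) t,
            (r * Real.exp (-b * s) + (a / b) * (1 - Real.exp (-b * s)) + σ * X s ω))))) ∂P)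
      ≤ ENNReal.ofReal (Real.exp (α * |r| / ((1 - α) * b)) /
          ((1 / (1 - α)) * (γ - α * a / b - α ^ 2 * σ ^ 2 / (2 * (1 - α) * b ^ 2)))) := by
  intro r
  have h1α : 0 < 1 - α := by linarith
  set c : ℝ := 1 / (1 - α) with hc
  have hcpos : 0 < c := by rw [hc]; positivity
  set ρ : ℝ := c * (γ - α * a / b - α ^ 2 * σ ^ 2 / (2 * (1 - α) * b ^ 2)) with hρdef
  set u : ℝ := c * α * σ with hu
  set K : ℝ := α * |r| / ((1 - α) * b) with hK
  clear_value K u ρ c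
  -- joint measurability of the inner time integral
  have hI : StronglyMeasurable fun p : Ω × ℝ => ∫ s in Set.Ioc (0:ℝ) p.2,
      (r * Real.exp (-b * s) + (a / b) * (1 - Real.exp (-b * s)) + σ * X s p.1) := by
    have hgmeas : Measurable fun q : (Ω × ℝ) × ℝ =>
        (r * Real.exp (-b * q.2) + (a / b) * (1 - Real.exp (-b * q.2)) + σ * X q.2 q.1.1) := by
      fun_prop
    have hSmeas : MeasurableSet {q : (Ω × ℝ) × ℝ | 0 < q.2 ∧ q.2 ≤ q.1.2} :=
      (measurableSet_lt measurable_const measurable_snd).inter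
        (measurableSet_le measurable_snd (measurable_snd.comp measurable_fst))
    have heq : (fun p : Ω × ℝ => ∫ s in Set.Ioc (0:ℝ) p.2,
        (r * Real.exp (-b * s) + (a / b) * (1 - Real.exp (-b * s)) + σ * X s p.1)) =
        fun p : Ω × ℝ => ∫ s, ({q : (Ω × ℝ) × ℝ | 0 < q.2 ∧ q.2 ≤ q.1.2}.indicator
          (fun q : (Ω × ℝ) × ℝ =>
            r * Real.exp (-b * q.2) + (a / b) * (1 - Real.exp (-b * q.2)) + σ * X q.2 q.1.1))
          (p, s) := by
      funext p
      rw [← integral_indicator measurableSet_Ioc]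
      apply integral_congr_ae
      filter_upwards with s
      simp only [Set.indicator_apply, Set.mem_Ioc, Set.mem_setOf_eq]
    rw [heq]
    exact (hgmeas.indicator hSmeas).stronglyMeasurable.integral_prod_right'
  have hImeas := hI.measurable
  -- per-t measurability of Y
  have hYmeas : ∀ t : ℝ, Measurable fun ω => ∫ s in Set.Ioc (0:ℝ) t, X s ω := by
    intro t
    have hgm : Measurable fun q : Ω × ℝ => X q.2 q.1 := by fun_prop
    have heq : (fun ω => ∫ s in Set.Ioc (0:ℝ) t, X s ω) =
        fun ω => ∫ s, ({q : Ω × ℝ | q.2 ∈ Set.Ioc (0:ℝ) t}.indicator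
          (fun q : Ω × ℝ => X q.2 q.1)) (ω, s) := by
      funext ω
      rw [← integral_indicator measurableSet_Ioc]
      apply integral_congr_ae
      filter_upwards with s
      simp only [Set.indicator_apply, Set.mem_Ioc, Set.mem_setOf_eq]
    rw [heq]
    exact ((hgm.indicator (measurable_snd measurableSet_Ioc)).stronglyMeasurable.integral_prod_right').measurable
  -- swap the order of integration
  have hGmeas : Measurable fun p : Ω × ℝ => ENNReal.ofReal (Real.exp (c * (-γ * p.2 +
      α * ∫ s in Set.Ioc (0:ℝ) p.2,
        (r * Real.exp (-b * s) + (a / b) * (1 - Real.exp (-b * s)) + σ * X s p.1)))) := by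
    fun_prop
  have hswap := lintegral_lintegral_swap (μ := P) (ν := volume.restrict (Set.Ioi (0:ℝ)))
    (f := fun ω t => ENNReal.ofReal (Real.exp (c * (-γ * t +
      α * ∫ s in Set.Ioc (0:ℝ) t,
        (r * Real.exp (-b * s) + (a / b) * (1 - Real.exp (-b * s)) + σ * X s ω)))))
    hGmeas.aemeasurable
  rw [hswap]
  -- per-t bound
  have inner : ∀ t ∈ Set.Ioi (0:ℝ),
      (∫⁻ ω, ENNReal.ofReal (Real.exp (c * (-γ * t +
        α * ∫ s in Set.Ioc (0:ℝ) t,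
          (r * Real.exp (-b * s) + (a / b) * (1 - Real.exp (-b * s)) + σ * X s ω)))) ∂P)
      ≤ ENNReal.ofReal (Real.exp (K - ρ * t)) := by
    intro t ht
    rw [Set.mem_Ioi] at ht
    set A : ℝ := ∫ s in Set.Ioc (0:ℝ) t,
      (r * Real.exp (-b * s) + (a / b) * (1 - Real.exp (-b * s))) with hAdef
    have hdecomp : ∀ᵐ ω ∂P, (∫ s in Set.Ioc (0:ℝ) t,
        (r * Real.exp (-b * s) + (a / b) * (1 - Real.exp (-b * s)) + σ * X s ω)) =
        A + σ * ∫ s in Set.Ioc (0:ℝ) t, X s ω := by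
      filter_upwards [hXcont] with ω hcω
      have hd_int : IntegrableOn
          (fun s : ℝ => r * Real.exp (-b * s) + (a / b) * (1 - Real.exp (-b * s)))
          (Set.Ioc 0 t) := Continuous.integrableOn_Ioc (by fun_prop)
      have hX_int : IntegrableOn (fun s : ℝ => σ * X s ω) (Set.Ioc 0 t) :=
        (continuous_const.mul hcω).integrableOn_Ioc
      rw [integral_add hd_int hX_int, integral_const_mul]
    have hYm := hYmeas t
    have hfx : Measurable fun x : ℝ => ENNReal.ofReal (Real.exp (u * x)) := by fun_prop
    calc (∫⁻ ω, ENNReal.ofReal (Real.exp (c * (-γ * t +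
          α * ∫ s in Set.Ioc (0:ℝ) t,
            (r * Real.exp (-b * s) + (a / b) * (1 - Real.exp (-b * s)) + σ * X s ω)))) ∂P)
        = ∫⁻ ω, ENNReal.ofReal (Real.exp (c * (-γ * t + α * A))) *
            ENNReal.ofReal (Real.exp (u * ∫ s in Set.Ioc (0:ℝ) t, X s ω)) ∂P := by
          apply lintegral_congr_ae
          filter_upwards [hdecomp] with ω hω
          rw [hω, ← ENNReal.ofReal_mul (Real.exp_pos _).le, ← Real.exp_add]
          congr 2
          rw [hu]
          ring
      _ = ENNReal.ofReal (Real.exp (c * (-γ * t + α * A))) *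
            ∫⁻ ω, ENNReal.ofReal (Real.exp (u * ∫ s in Set.Ioc (0:ℝ) t, X s ω)) ∂P :=
          lintegral_const_mul _ (hfx.comp hYm)
      _ = ENNReal.ofReal (Real.exp (c * (-γ * t + α * A))) *
            ENNReal.ofReal (Real.exp (u ^ 2 * ((Real.toNNReal ((1 / b ^ 2) *
              (t - 3 / (2 * b) + (2 / b) * Real.exp (-b * t)
                - (1 / (2 * b)) * Real.exp (-2 * b * t))) : ℝ≥0) : ℝ) / 2)) := by
          rw [← lintegral_map hfx hYm, hYlaw t ht.le, lintegral_exp_gaussian]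
      _ = ENNReal.ofReal (Real.exp (c * (-γ * t + α * A) +
            u ^ 2 * ((Real.toNNReal ((1 / b ^ 2) *
              (t - 3 / (2 * b) + (2 / b) * Real.exp (-b * t)
                - (1 / (2 * b)) * Real.exp (-2 * b * t))) : ℝ≥0) : ℝ) / 2)) := by
          rw [← ENNReal.ofReal_mul (Real.exp_pos _).le, ← Real.exp_add]
      _ ≤ ENNReal.ofReal (Real.exp (K - ρ * t)) := by
          apply ENNReal.ofReal_le_ofReal
          apply Real.exp_le_exp.mpr
          have hAb : A ≤ |r| / b + (a / b) * t := det_bound r ha hb ht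
          have hvb := var_bound (t := t) hb ht.le
          have h1 : c * α * A ≤ c * α * (|r| / b + (a / b) * t) :=
            mul_le_mul_of_nonneg_left hAb (by positivity)
          have h2 : u ^ 2 * ((Real.toNNReal ((1 / b ^ 2) *
              (t - 3 / (2 * b) + (2 / b) * Real.exp (-b * t)
                - (1 / (2 * b)) * Real.exp (-2 * b * t))) : ℝ≥0) : ℝ) / 2
              ≤ u ^ 2 * (t / b ^ 2) / 2 := by
            have := mul_le_mul_of_nonneg_left hvb (sq_nonneg u)
            linarith
          have h0 : c * (-γ * t + α * A) = c * (-γ * t) + c * α * A := by ring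
          have heq2 : c * (-γ * t) + c * α * (|r| / b + (a / b) * t) + u ^ 2 * (t / b ^ 2) / 2
              = K - ρ * t := by
            rw [hK, hρdef, hu, hc]
            field_simp
            ring
          linarith
  calc ∫⁻ t in Set.Ioi (0:ℝ), (∫⁻ ω, ENNReal.ofReal (Real.exp (c * (-γ * t +
        α * ∫ s in Set.Ioc (0:ℝ) t,
          (r * Real.exp (-b * s) + (a / b) * (1 - Real.exp (-b * s)) + σ * X s ω)))) ∂P)
      ≤ ∫⁻ t in Set.Ioi (0:ℝ), ENNReal.ofReal (Real.exp (K - ρ * t)) :=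
        setLIntegral_mono (by fun_prop) inner
    _ = ENNReal.ofReal (Real.exp K / ρ) := by
        have hpt : ∀ t : ℝ, ENNReal.ofReal (Real.exp (K - ρ * t)) =
            ENNReal.ofReal (Real.exp K) * ENNReal.ofReal (Real.exp (-(ρ * t))) := by
          intro t
          rw [← ENNReal.ofReal_mul (Real.exp_pos _).le, ← Real.exp_add]
          ring_nf
        simp_rw [hpt]
        rw [lintegral_const_mul _ (by fun_prop), lintegral_exp_neg_mul_Ioi hρ,
          ← ENNReal.ofReal_mul (Real.exp_pos _).le, div_eq_mul_inv]
end

section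
/- Let E be the space of continuous functions φ : ℝ → ℝ with φ(r)e^{-(α/b)|r|} → 0 as |r| → ∞, normed by ‖φ‖ = sup_r |φ(r)| e^{-(α/b)|r|}, and let (r_t) be the Vasicek process dr_t = (a - br_t)dt + σdW_t with a, b, σ > 0 and 0 < α < 1. Then for P_tφ(r) = E^r[φ(r_t) e^{α∫₀ᵗ r_s ds}] one has ‖P_tφ‖ ≤ 2 e^{(α²σ²/(2b²) + αa/b) t} ‖φ‖ for all φ ∈ E and t ≥ 0. -/
open MeasureTheory ProbabilityTheory Real Filter
open scoped NNReal ENNReal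

set_option maxHeartbeats 1000000

lemma aux_integral_exp_gaussianReal (v : ℝ≥0) :
    Integrable Real.exp (gaussianReal 0 v) ∧
    ∫ x, Real.exp x ∂(gaussianReal 0 v) = Real.exp ((v : ℝ) / 2) := by
  by_cases hv : v = 0
  · subst hv
    rw [gaussianReal_zero_var]
    constructor
    · refine ⟨Real.continuous_exp.aestronglyMeasurable, ?_⟩
      rw [HasFiniteIntegral, lintegral_dirac]
      exact ENNReal.coe_lt_top
    · rw [integral_dirac]
      simp
  · have hv' : (v : ℝ) ≠ 0 := by exact_mod_cast hv
    have hv0 : (0 : ℝ) < v := lt_of_le_of_ne v.coe_nonneg (Ne.symm hv')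
    have hpt : ∀ x : ℝ, gaussianPDFReal 0 v x * Real.exp x
        = Real.exp ((v : ℝ) / 2) * gaussianPDFReal (v : ℝ) v x := by
      intro x
      simp only [gaussianPDFReal]
      rw [mul_assoc, ← Real.exp_add, mul_left_comm, ← Real.exp_add]
      congr 2
      field_simp
      ring
    have hmeas : Measurable fun x => (gaussianPDFReal 0 v x).toNNReal :=
      (measurable_gaussianPDFReal 0 v).real_toNNReal
    have hdens : gaussianReal 0 v
        = volume.withDensity (fun x => ((gaussianPDFReal 0 v x).toNNReal : ℝ≥0∞)) := by
      rw [gaussianReal_of_var_ne_zero 0 hv]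
      rfl
    have hint : Integrable (fun x => (gaussianPDFReal 0 v x).toNNReal • Real.exp x) volume := by
      simp only [NNReal.smul_def, smul_eq_mul]
      have : (fun x => ((gaussianPDFReal 0 v x).toNNReal : ℝ) * Real.exp x)
          = fun x => Real.exp ((v : ℝ) / 2) * gaussianPDFReal (v : ℝ) v x := by
        funext x
        rw [Real.coe_toNNReal _ (gaussianPDFReal_nonneg 0 v x), hpt x]
      rw [this]
      exact (integrable_gaussianPDFReal (v : ℝ) v).const_mul _
    constructor
    · rw [hdens]
      rw [integrable_withDensity_iff_integrable_smul hmeas]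
      exact hint
    · rw [hdens, integral_withDensity_eq_integral_smul hmeas]
      simp only [NNReal.smul_def, smul_eq_mul]
      have : (fun x => ((gaussianPDFReal 0 v x).toNNReal : ℝ) * Real.exp x)
          = fun x => Real.exp ((v : ℝ) / 2) * gaussianPDFReal (v : ℝ) v x := by
        funext x
        rw [Real.coe_toNNReal _ (gaussianPDFReal_nonneg 0 v x), hpt x]
      rw [this, integral_const_mul, integral_gaussianPDFReal_eq_one (v : ℝ) hv, mul_one]

/-- (Norm bound for the Feynman–Kac semigroup in the Vasicek model.)
Let `a, b, σ > 0`, `0 < α < 1`, and let `(X_t)` be the Ornstein–Uhlenbeck integral process: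
a measurable process with continuous paths whose linear combinations
`c X_t + d ∫₀ᵗ X_s ds` are centered Gaussian with variance
`∫₀ᵗ (c e^{-b(t-u)} + (d/b)(1 - e^{-b(t-u)}))² du`. Let `φ` be continuous with
`|φ(r)| e^{-(α/b)|r|} → 0` as `|r| → ∞` and `|φ(r)| e^{-(α/b)|r|} ≤ M` for all `r`.
Then, for the Vasicek short rate started at `r` and `P_tφ(r) = E^r[φ(r_t) e^{α∫₀ᵗ r_s ds}]`,
`|P_tφ(r)| e^{-(α/b)|r|} ≤ 2 e^{(α²σ²/(2b²) + αa/b)t} M` for every `r`, i.e.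
`‖P_tφ‖_E ≤ 2 e^{(α²σ²/(2b²) + αa/b)t} ‖φ‖_E`. -/
theorem vasicek_semigroup_norm_bound {Ω : Type*} [MeasurableSpace Ω] (P : Measure Ω)
    [IsProbabilityMeasure P] (a b σ α : ℝ)
    (ha : 0 < a) (hb : 0 < b) (hσ : 0 < σ) (hα0 : 0 < α) (hα1 : α < 1)
    (X : ℝ → Ω → ℝ)
    (hXmeas : Measurable fun p : ℝ × Ω => X p.1 p.2)
    (hXcont : ∀ᵐ ω ∂P, Continuous fun s => X s ω)
    (hlaw : ∀ c d t : ℝ, 0 ≤ t →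
      Measure.map (fun ω => c * X t ω + d * ∫ s in Set.Ioc (0 : ℝ) t, X s ω) P =
        gaussianReal 0 (Real.toNNReal (∫ u in Set.Ioc (0 : ℝ) t,
          (c * Real.exp (-b * (t - u)) + (d / b) * (1 - Real.exp (-b * (t - u)))) ^ 2)))
    (φ : ℝ → ℝ) (hφc : Continuous φ)
    (hφE : Tendsto (fun r : ℝ => |φ r| * Real.exp (-(α / b) * |r|)) (cocompact ℝ) (nhds 0))
    (t : ℝ) (ht : 0 ≤ t) (M : ℝ)
    (hM : ∀ r : ℝ, |φ r| * Real.exp (-(α / b) * |r|) ≤ M) :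
    ∀ r : ℝ,
      |∫ ω, φ (r * Real.exp (-b * t) + (a / b) * (1 - Real.exp (-b * t)) + σ * X t ω) *
          Real.exp (α * ∫ s in Set.Ioc (0 : ℝ) t,
            (r * Real.exp (-b * s) + (a / b) * (1 - Real.exp (-b * s)) + σ * X s ω)) ∂P| *
        Real.exp (-(α / b) * |r|) ≤
      2 * Real.exp ((α ^ 2 * σ ^ 2 / (2 * b ^ 2) + α * a / b) * t) * M := by
  intro r
  have hb' : b ≠ 0 := ne_of_gt hb
  have hM0 : (0 : ℝ) ≤ M := le_trans (by positivity) (hM 0)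
  set Et := Real.exp (-b * t) with hEtdef
  clear_value Et
  have hEt0 : 0 < Et := by rw [hEtdef]; exact Real.exp_pos _
  have hEt1 : Et ≤ 1 := by
    rw [hEtdef]
    calc Real.exp (-b * t) ≤ Real.exp 0 := Real.exp_le_exp.mpr (by nlinarith)
    _ = 1 := Real.exp_zero
  -- measurability
  have hXtmeas : Measurable fun ω => X t ω :=
    hXmeas.comp (measurable_const.prodMk measurable_id)
  have hYmeas : Measurable fun ω => ∫ s in Set.Ioc (0 : ℝ) t, X s ω := by
    have hswap : Measurable fun p : Ω × ℝ => X p.2 p.1 := hXmeas.comp measurable_swap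
    exact (hswap.stronglyMeasurable.integral_prod_right'
      (ν := volume.restrict (Set.Ioc (0 : ℝ) t))).measurable
  have hIocfin : MeasureTheory.volume (Set.Ioc (0 : ℝ) t) < ⊤ := by
    rw [Real.volume_Ioc]; exact ENNReal.ofReal_lt_top
  -- the deterministic integral
  have hIexp : ∫ s in Set.Ioc (0 : ℝ) t, Real.exp (-b * s) = (1 - Et) / b := by
    rw [← intervalIntegral.integral_of_le ht]
    have hderiv : ∀ x ∈ Set.uIcc (0 : ℝ) t,
        HasDerivAt (fun s => -Real.exp (-b * s) / b) (Real.exp (-b * x)) x := by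
      intro x _
      have h1 : HasDerivAt (fun s : ℝ => -b * s) (-b) x := by
        simpa using (hasDerivAt_id x).const_mul (-b)
      have h2 := h1.exp.neg.div_const b
      exact h2.congr_deriv (by field_simp)
    rw [intervalIntegral.integral_eq_sub_of_hasDerivAt hderiv
      ((Real.continuous_exp.comp (continuous_const.mul continuous_id)).intervalIntegrable 0 t)]
    rw [hEtdef]
    simp [mul_zero, Real.exp_zero]
    ring
  have hexpint : IntegrableOn (fun s => Real.exp (-b * s)) (Set.Ioc (0 : ℝ) t) volume :=
    (Real.continuous_exp.comp (continuous_const.mul continuous_id)).integrableOn_Ioc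
  have hD : ∫ s in Set.Ioc (0 : ℝ) t,
      (r * Real.exp (-b * s) + (a / b) * (1 - Real.exp (-b * s)))
      = (r - a / b) * ((1 - Et) / b) + (a / b) * t := by
    have hrw : ∀ s : ℝ, r * Real.exp (-b * s) + (a / b) * (1 - Real.exp (-b * s))
        = (r - a / b) * Real.exp (-b * s) + a / b := fun s => by ring
    simp_rw [hrw]
    rw [integral_add (hexpint.const_mul _) (integrableOn_const hIocfin.ne),
      integral_const_mul, hIexp, setIntegral_const, measureReal_def, Real.volume_Ioc, sub_zero,
      ENNReal.toReal_ofReal ht, smul_eq_mul]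
    ring
  set D : ℝ := (r - a / b) * ((1 - Et) / b) + (a / b) * t with hDdef
  clear_value D
  -- a.e. rewrite of the inner integral
  have hinner : ∀ᵐ ω ∂P, (∫ s in Set.Ioc (0 : ℝ) t,
      (r * Real.exp (-b * s) + (a / b) * (1 - Real.exp (-b * s)) + σ * X s ω))
      = D + σ * ∫ s in Set.Ioc (0 : ℝ) t, X s ω := by
    filter_upwards [hXcont] with ω hc
    have h1 : IntegrableOn (fun s => r * Real.exp (-b * s) + (a / b) * (1 - Real.exp (-b * s)))
        (Set.Ioc (0 : ℝ) t) volume := by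
      have hce : Continuous fun s : ℝ => Real.exp (-b * s) :=
        Real.continuous_exp.comp (continuous_const.mul continuous_id)
      exact ((continuous_const.mul hce).add
        (continuous_const.mul (continuous_const.sub hce))).integrableOn_Ioc
    have h2 : IntegrableOn (fun s => σ * X s ω) (Set.Ioc (0 : ℝ) t) volume :=
      (continuous_const.mul hc).integrableOn_Ioc
    rw [integral_add h1 h2, integral_const_mul, hD]
  -- gaussian exponential moments
  have hT : ∀ cc : ℝ,
      Integrable (fun ω => Real.exp (cc * X t ω + (α * σ) * ∫ s in Set.Ioc (0 : ℝ) t, X s ω)) P ∧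
      ∫ ω, Real.exp (cc * X t ω + (α * σ) * ∫ s in Set.Ioc (0 : ℝ) t, X s ω) ∂P
        = Real.exp (((Real.toNNReal (∫ u in Set.Ioc (0 : ℝ) t,
            (cc * Real.exp (-b * (t - u)) + (α * σ / b) * (1 - Real.exp (-b * (t - u)))) ^ 2)
            : ℝ≥0) : ℝ) / 2) := by
    intro cc
    have hmap := hlaw cc (α * σ) t ht
    have hTm : Measurable (fun ω => cc * X t ω
        + (α * σ) * ∫ s in Set.Ioc (0 : ℝ) t, X s ω) :=
      (hXtmeas.const_mul cc).add (hYmeas.const_mul (α * σ))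
    obtain ⟨hgi, hgv⟩ := aux_integral_exp_gaussianReal
      (Real.toNNReal (∫ u in Set.Ioc (0 : ℝ) t,
        (cc * Real.exp (-b * (t - u)) + (α * σ / b) * (1 - Real.exp (-b * (t - u)))) ^ 2))
    constructor
    · rw [← hmap] at hgi
      have := (integrable_map_measure Real.continuous_exp.aestronglyMeasurable
        hTm.aemeasurable).mp hgi
      exact this
    · rw [← hgv, ← hmap, integral_map hTm.aemeasurable Real.continuous_exp.aestronglyMeasurable]
  -- variance bound
  have hVb : ∀ cc : ℝ, |cc| ≤ α * σ / b →
      ((Real.toNNReal (∫ u in Set.Ioc (0 : ℝ) t,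
        (cc * Real.exp (-b * (t - u)) + (α * σ / b) * (1 - Real.exp (-b * (t - u)))) ^ 2)
        : ℝ≥0) : ℝ) ≤ (α * σ / b) ^ 2 * t := by
    intro cc hcc
    have hc0 : (0 : ℝ) ≤ α * σ / b := le_trans (abs_nonneg cc) hcc
    have hct : (0 : ℝ) ≤ (α * σ / b) ^ 2 * t := by positivity
    rw [Real.coe_toNNReal']
    refine max_le ?_ hct
    have habs := abs_le.mp hcc
    have hmono : (∫ u in Set.Ioc (0 : ℝ) t,
        (cc * Real.exp (-b * (t - u)) + (α * σ / b) * (1 - Real.exp (-b * (t - u)))) ^ 2)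
        ≤ ∫ _u in Set.Ioc (0 : ℝ) t, (α * σ / b) ^ 2 := by
      refine setIntegral_mono_on ?_ ?_ measurableSet_Ioc ?_
      · have hce2 : Continuous fun u : ℝ => Real.exp (-b * (t - u)) :=
          Real.continuous_exp.comp (continuous_const.mul (continuous_const.sub continuous_id))
        exact (((continuous_const.mul hce2).add
          (continuous_const.mul (continuous_const.sub hce2))).pow 2).integrableOn_Ioc
      · exact integrableOn_const hIocfin.ne
      · intro u hu
        have he0 : 0 < Real.exp (-b * (t - u)) := Real.exp_pos _
        have he1 : Real.exp (-b * (t - u)) ≤ 1 := by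
          calc Real.exp (-b * (t - u)) ≤ Real.exp 0 :=
            Real.exp_le_exp.mpr (by nlinarith [hu.2])
          _ = 1 := Real.exp_zero
        set q := Real.exp (-b * (t - u)) with hq
        have h1 : 0 ≤ (α * σ / b - cc) * q := mul_nonneg (by linarith) he0.le
        have h2 : 0 ≤ (cc + α * σ / b) * q + 2 * (α * σ / b) * (1 - q) :=
          add_nonneg (mul_nonneg (by linarith) he0.le)
            (by nlinarith)
        nlinarith [mul_nonneg h1 h2]
    have hconst : (∫ _u in Set.Ioc (0 : ℝ) t, (α * σ / b) ^ 2) = (α * σ / b) ^ 2 * t := by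
      rw [setIntegral_const, measureReal_def, Real.volume_Ioc, sub_zero, ENNReal.toReal_ofReal ht, smul_eq_mul]
      ring
    linarith
  -- constants
  set Kp : ℝ := α / b * (r * Et + (a / b) * (1 - Et)) + α * D with hKpdef
  set Km : ℝ := -(α / b) * (r * Et + (a / b) * (1 - Et)) + α * D with hKmdef
  clear_value Kp Km
  obtain ⟨hip, hep⟩ := hT (α * σ / b)
  obtain ⟨him, hem⟩ := hT (-(α * σ / b))
  set vp : ℝ := ((Real.toNNReal (∫ u in Set.Ioc (0 : ℝ) t,
      ((α * σ / b) * Real.exp (-b * (t - u))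
        + (α * σ / b) * (1 - Real.exp (-b * (t - u)))) ^ 2) : ℝ≥0) : ℝ) with hvpdef
  set vm : ℝ := ((Real.toNNReal (∫ u in Set.Ioc (0 : ℝ) t,
      ((-(α * σ / b)) * Real.exp (-b * (t - u))
        + (α * σ / b) * (1 - Real.exp (-b * (t - u)))) ^ 2) : ℝ≥0) : ℝ) with hvmdef
  clear_value vp vm
  have hc0 : (0 : ℝ) ≤ α * σ / b := by positivity
  have hvp_le : vp ≤ (α * σ / b) ^ 2 * t := by
    rw [hvpdef]; exact hVb _ (by rw [abs_of_nonneg hc0])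
  have hvm_le : vm ≤ (α * σ / b) ^ 2 * t := by
    rw [hvmdef]; exact hVb _ (by rw [abs_neg, abs_of_nonneg hc0])
  -- helper bounds for φ
  have hMle : ∀ x : ℝ, |φ x| ≤ M * Real.exp ((α / b) * |x|) := by
    intro x
    have h1 := hM x
    have h2 : |φ x| = |φ x| * Real.exp (-(α / b) * |x|) * Real.exp ((α / b) * |x|) := by
      rw [mul_assoc, ← Real.exp_add]; simp
    rw [h2]
    exact mul_le_mul_of_nonneg_right h1 (Real.exp_pos _).le
  have hexpabs : ∀ x : ℝ, Real.exp ((α / b) * |x|)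
      ≤ Real.exp ((α / b) * x) + Real.exp (-((α / b) * x)) := by
    intro x
    rcases le_total 0 x with h | h
    · rw [abs_of_nonneg h]; exact le_add_of_nonneg_right (Real.exp_pos _).le
    · rw [abs_of_nonpos h, mul_neg]; exact le_add_of_nonneg_left (Real.exp_pos _).le
  -- dominating function
  have hgint : Integrable (fun ω => M * Real.exp Kp
        * Real.exp ((α * σ / b) * X t ω + (α * σ) * ∫ s in Set.Ioc (0 : ℝ) t, X s ω)
      + M * Real.exp Km
        * Real.exp ((-(α * σ / b)) * X t ω + (α * σ) * ∫ s in Set.Ioc (0 : ℝ) t, X s ω)) P := (hip.const_mul _).add (him.const_mul _)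
  have hdom : ∀ᵐ ω ∂P,
      |φ (r * Et + (a / b) * (1 - Et) + σ * X t ω) *
        Real.exp (α * ∫ s in Set.Ioc (0 : ℝ) t,
          (r * Real.exp (-b * s) + (a / b) * (1 - Real.exp (-b * s)) + σ * X s ω))|
        ≤ M * Real.exp Kp
            * Real.exp ((α * σ / b) * X t ω + (α * σ) * ∫ s in Set.Ioc (0 : ℝ) t, X s ω)
          + M * Real.exp Km
            * Real.exp ((-(α * σ / b)) * X t ω + (α * σ) * ∫ s in Set.Ioc (0 : ℝ) t, X s ω) := by
    filter_upwards [hinner] with ω hI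
    rw [hI, abs_mul, Real.abs_exp]
    set A : ℝ := r * Et + (a / b) * (1 - Et) + σ * X t ω with hAdef
    set Yw : ℝ := ∫ s in Set.Ioc (0 : ℝ) t, X s ω with hYwdef
    calc |φ A| * Real.exp (α * (D + σ * Yw))
        ≤ M * Real.exp ((α / b) * |A|) * Real.exp (α * (D + σ * Yw)) :=
          mul_le_mul_of_nonneg_right (hMle A) (Real.exp_pos _).le
      _ ≤ M * (Real.exp ((α / b) * A) + Real.exp (-((α / b) * A)))
            * Real.exp (α * (D + σ * Yw)) :=
          mul_le_mul_of_nonneg_right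
            (mul_le_mul_of_nonneg_left (hexpabs A) hM0) (Real.exp_pos _).le
      _ = M * Real.exp Kp * Real.exp ((α * σ / b) * X t ω + (α * σ) * Yw)
          + M * Real.exp Km * Real.exp ((-(α * σ / b)) * X t ω + (α * σ) * Yw) := by
          have e1 : Real.exp ((α / b) * A) * Real.exp (α * (D + σ * Yw))
              = Real.exp Kp * Real.exp ((α * σ / b) * X t ω + (α * σ) * Yw) := by
            rw [← Real.exp_add, ← Real.exp_add, hAdef, hKpdef]
            congr 1
            ring
          have e2 : Real.exp (-((α / b) * A)) * Real.exp (α * (D + σ * Yw))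
              = Real.exp Km * Real.exp ((-(α * σ / b)) * X t ω + (α * σ) * Yw) := by
            rw [← Real.exp_add, ← Real.exp_add, hAdef, hKmdef]
            congr 1
            ring
          calc M * (Real.exp ((α / b) * A) + Real.exp (-((α / b) * A)))
                * Real.exp (α * (D + σ * Yw))
              = M * (Real.exp ((α / b) * A) * Real.exp (α * (D + σ * Yw)))
                + M * (Real.exp (-((α / b) * A)) * Real.exp (α * (D + σ * Yw))) := by ring
            _ = _ := by rw [e1, e2]; ring
  -- main estimate
  have hmain : |∫ ω, φ (r * Et + (a / b) * (1 - Et) + σ * X t ω) *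
        Real.exp (α * ∫ s in Set.Ioc (0 : ℝ) t,
          (r * Real.exp (-b * s) + (a / b) * (1 - Real.exp (-b * s)) + σ * X s ω)) ∂P|
      ≤ ∫ ω, (M * Real.exp Kp
            * Real.exp ((α * σ / b) * X t ω + (α * σ) * ∫ s in Set.Ioc (0 : ℝ) t, X s ω)
          + M * Real.exp Km
            * Real.exp ((-(α * σ / b)) * X t ω + (α * σ) * ∫ s in Set.Ioc (0 : ℝ) t, X s ω)) ∂P := by
    calc |∫ ω, φ (r * Et + (a / b) * (1 - Et) + σ * X t ω) *
          Real.exp (α * ∫ s in Set.Ioc (0 : ℝ) t,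
            (r * Real.exp (-b * s) + (a / b) * (1 - Real.exp (-b * s)) + σ * X s ω)) ∂P|
        ≤ ∫ ω, |φ (r * Et + (a / b) * (1 - Et) + σ * X t ω) *
            Real.exp (α * ∫ s in Set.Ioc (0 : ℝ) t,
              (r * Real.exp (-b * s) + (a / b) * (1 - Real.exp (-b * s)) + σ * X s ω))| ∂P := by
          simpa only [Real.norm_eq_abs] using norm_integral_le_integral_norm (μ := P)
            (fun ω => φ (r * Et + (a / b) * (1 - Et) + σ * X t ω) *
              Real.exp (α * ∫ s in Set.Ioc (0 : ℝ) t,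
                (r * Real.exp (-b * s) + (a / b) * (1 - Real.exp (-b * s)) + σ * X s ω)))
      _ ≤ _ :=
          integral_mono_of_nonneg (Eventually.of_forall fun ω => abs_nonneg _) hgint hdom
  have hgval : ∫ ω, (M * Real.exp Kp
            * Real.exp ((α * σ / b) * X t ω + (α * σ) * ∫ s in Set.Ioc (0 : ℝ) t, X s ω)
          + M * Real.exp Km
            * Real.exp ((-(α * σ / b)) * X t ω + (α * σ) * ∫ s in Set.Ioc (0 : ℝ) t, X s ω)) ∂P
      = M * Real.exp Kp * Real.exp (vp / 2) + M * Real.exp Km * Real.exp (vm / 2) := by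
    rw [integral_add (hip.const_mul _) (him.const_mul _), integral_const_mul,
      integral_const_mul, hep, hem]
  -- exponent bounds
  have hβ : (0:ℝ) < Real.exp (-(α / b) * |r|) := Real.exp_pos _
  have hKp_eq : Kp = α * r / b + α * a * t / b := by
    rw [hKpdef, hDdef]; field_simp; ring
  have hKm_eq : Km = α / b * (r * (1 - 2 * Et)) + α * a * t / b
      - 2 * (α * a / b ^ 2) * (1 - Et) := by
    rw [hKmdef, hDdef]; field_simp; ring
  have hr1 : α / b * r ≤ α / b * |r| :=
    mul_le_mul_of_nonneg_left (le_abs_self r) (by positivity)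
  have hr2 : α / b * (r * (1 - 2 * Et)) ≤ α / b * |r| := by
    refine mul_le_mul_of_nonneg_left ?_ (by positivity)
    calc r * (1 - 2 * Et) ≤ |r * (1 - 2 * Et)| := le_abs_self _
      _ = |r| * |1 - 2 * Et| := abs_mul _ _
      _ ≤ |r| * 1 := mul_le_mul_of_nonneg_left
          (abs_le.mpr ⟨by linarith, by linarith⟩) (abs_nonneg r)
      _ = |r| := mul_one _
  have hnn : 0 ≤ 2 * (α * a / b ^ 2) * (1 - Et) :=
    mul_nonneg (by positivity) (by linarith)
  have hexpP : Kp + vp / 2 + (-(α / b) * |r|)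
      ≤ (α ^ 2 * σ ^ 2 / (2 * b ^ 2) + α * a / b) * t := by
    rw [hKp_eq]
    have h2 : α ^ 2 * σ ^ 2 / (2 * b ^ 2) = (α * σ / b) ^ 2 / 2 := by
      field_simp
    rw [h2]
    ring_nf
    ring_nf at hvp_le hr1
    linarith
  have hexpM : Km + vm / 2 + (-(α / b) * |r|)
      ≤ (α ^ 2 * σ ^ 2 / (2 * b ^ 2) + α * a / b) * t := by
    rw [hKm_eq]
    have h2 : α ^ 2 * σ ^ 2 / (2 * b ^ 2) = (α * σ / b) ^ 2 / 2 := by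
      field_simp
    rw [h2]
    ring_nf
    ring_nf at hvm_le hr2 hnn
    linarith
  calc |∫ ω, φ (r * Et + (a / b) * (1 - Et) + σ * X t ω) *
        Real.exp (α * ∫ s in Set.Ioc (0 : ℝ) t,
          (r * Real.exp (-b * s) + (a / b) * (1 - Real.exp (-b * s)) + σ * X s ω)) ∂P| *
      Real.exp (-(α / b) * |r|)
      ≤ (∫ ω, (M * Real.exp Kp
            * Real.exp ((α * σ / b) * X t ω + (α * σ) * ∫ s in Set.Ioc (0 : ℝ) t, X s ω)
          + M * Real.exp Km
            * Real.exp ((-(α * σ / b)) * X t ω + (α * σ) * ∫ s in Set.Ioc (0 : ℝ) t, X s ω)) ∂P)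
          * Real.exp (-(α / b) * |r|) :=
        mul_le_mul_of_nonneg_right hmain hβ.le
    _ = M * Real.exp (Kp + vp / 2 + (-(α / b) * |r|))
        + M * Real.exp (Km + vm / 2 + (-(α / b) * |r|)) := by
        rw [hgval]
        simp only [Real.exp_add]
        ring
    _ ≤ M * Real.exp ((α ^ 2 * σ ^ 2 / (2 * b ^ 2) + α * a / b) * t)
        + M * Real.exp ((α ^ 2 * σ ^ 2 / (2 * b ^ 2) + α * a / b) * t) := by
        exact add_le_add
          (mul_le_mul_of_nonneg_left (Real.exp_le_exp.mpr hexpP) hM0)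
          (mul_le_mul_of_nonneg_left (Real.exp_le_exp.mpr hexpM) hM0)
    _ = 2 * Real.exp ((α ^ 2 * σ ^ 2 / (2 * b ^ 2) + α * a / b) * t) * M := by ring
end
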